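/- arXiv:1703.02930 — 5 statements merged into one kernel-verified Lean document; each statement's English description precedes it below -/
import Mathlib

section
/- Suppose a feedforward neural network with W parameters and L layers, a single real input and a single real output, whose computation units have continuous piecewise polynomial activation functions each with at most p ≥ 1 pieces and degree at most d ≥ 1, computes a function f : ℝ → ℝ with the property that |f(x) − (x mod 2)| < 1/2 for every integer x ∈ {0, 1, …, 2^m − 1}. Then m ≤ L·log₂(13·p·d^{(L+1)/2}·W/L). -/
/-- A feedforward neural network architecture together with its activation
functions.  The nodes are `Fin numNodes`, listed in topological order: every
edge goes from a node of smaller index to a node of strictly larger index.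
Nodes `0, …, numInputs − 1` are the input nodes (in-degree 0); all remaining
nodes are computation units; the last node is the (single) output unit. -/
structure NNArch where
  numNodes : ℕ
  numInputs : ℕ
  hIn : numInputs < numNodes
  edges : Finset (Fin numNodes × Fin numNodes)
  hTopo : ∀ e ∈ edges, e.1 < e.2
  hTarget : ∀ e ∈ edges, numInputs ≤ (e.2 : ℕ)
  act : Fin numNodes → ℝ → ℝ

namespace NNArch

/-- The output node: the last node in the topological order. -/
def outNode (N : NNArch) : Fin N.numNodes := ⟨N.numNodes - 1, by have := N.hIn; omega⟩

/-- The number `U` of computation units. -/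
def numUnits (N : NNArch) : ℕ := N.numNodes - N.numInputs

/-- The number `W` of parameters: one weight per edge and one bias per
computation unit. -/
def numParams (N : NNArch) : ℕ := N.edges.card + N.numUnits

/-- The edges entering node `v`. -/
def incoming (N : NNArch) (v : Fin N.numNodes) :
    Finset (Fin N.numNodes × Fin N.numNodes) :=
  N.edges.filter fun e => e.2 = v

/-- The output of node `v`, given edge weights `w`, biases `b` and network
input `x`.  An input node outputs the corresponding coordinate of `x`; a
computation unit applies its activation function to `wᵀz + b`, except the
output unit, which outputs `wᵀz + b` unchanged. -/
noncomputable def value (N : NNArch) (w : Fin N.numNodes × Fin N.numNodes → ℝ)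
    (b : Fin N.numNodes → ℝ) (x : Fin N.numInputs → ℝ) (v : Fin N.numNodes) : ℝ :=
  if hv : (v : ℕ) < N.numInputs then x ⟨v, hv⟩
  else
    let s := (∑ e ∈ (N.incoming v).attach, w e.1 * N.value w b x e.1.1) + b v
    if (v : ℕ) = N.numNodes - 1 then s else N.act v s
termination_by (v : ℕ)
decreasing_by
  have he := Finset.mem_filter.mp e.2
  have h1 := N.hTopo e.1 he.1
  have h2 : e.1.2 = v := he.2
  rw [Fin.lt_def] at h1
  omega

/-- The real-valued function computed by the network for a given setting of
the parameters. -/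
noncomputable def eval (N : NNArch) (w : Fin N.numNodes × Fin N.numNodes → ℝ)
    (b : Fin N.numNodes → ℝ) (x : Fin N.numInputs → ℝ) : ℝ :=
  N.value w b x N.outNode

/-- The class of functions computed by the architecture as its parameters
range over all real values. -/
def funClass (N : NNArch) : Set ((Fin N.numInputs → ℝ) → ℝ) :=
  { f | ∃ w b, f = N.eval w b }

/-- The layer of a node: `0` for nodes with no predecessors, and otherwise one
more than the maximal layer of a predecessor. -/
noncomputable def layer (N : NNArch) (v : Fin N.numNodes) : ℕ :=
  (N.incoming v).attach.sup fun e => N.layer e.1.1 + 1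
termination_by (v : ℕ)
decreasing_by
  have he := Finset.mem_filter.mp e.2
  have h1 := N.hTopo e.1 he.1
  have h2 : e.1.2 = v := he.2
  rw [Fin.lt_def] at h1
  omega

/-- The number `L` of layers: the layer of the output node. -/
noncomputable def depth (N : NNArch) : ℕ := N.layer N.outNode

/-- A ReLU network: every activation function is `x ↦ max 0 x`. -/
def IsReLU (N : NNArch) : Prop := ∀ v, N.act v = fun z => max 0 z

end NNArch

/-- A finite set `S` is shattered by `sgn(F)` if every binary pattern on `S`
is realized by the sign of some `f ∈ F`. -/
def Shatters {X : Type*} (F : Set (X → ℝ)) (S : Finset X) : Prop :=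
  ∀ c : X → Bool, ∃ f ∈ F, ∀ x ∈ S, (0 < f x ↔ c x = true)

/-- The index of the piece (among the `B + 1` intervals determined by the
breakpoints `t`) containing the point `x`. -/
noncomputable def pieceIndex {B : ℕ} (t : Fin B → ℝ) (x : ℝ) : Fin (B + 1) :=
  ⟨(Finset.univ.filter fun i => t i ≤ x).card, by
    have h : (Finset.univ.filter fun i => t i ≤ x).card ≤ B := by
      simpa using Finset.card_filter_le (Finset.univ : Finset (Fin B)) _
    omega⟩

/-- `f` is piecewise polynomial with at most `p` pieces, each of degree at
most `d`: there are `B` breakpoints (`B + 1 ≤ p`) listed in nondecreasing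
order, partitioning `ℝ` into at most `p` intervals, and on each resulting
interval `f` agrees with a polynomial of degree at most `d`. -/
def PiecewisePoly (f : ℝ → ℝ) (p d : ℕ) : Prop :=
  ∃ (B : ℕ) (t : Fin B → ℝ) (q : Fin (B + 1) → Polynomial ℝ),
    B + 1 ≤ p ∧ Monotone t ∧ (∀ i, (q i).natDegree ≤ d) ∧
    ∀ x : ℝ, f x = (q (pieceIndex t x)).eval x



/- ===================== auxiliary development ===================== -/

open Finset Polynomial

noncomputable section
open Classical

/-- number of elements of `s` that are `≤ x`. -/
def cnt (s : Finset ℝ) (x : ℝ) : ℕ := (s.filter (· ≤ x)).card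

lemma cnt_le_card (s : Finset ℝ) (x : ℝ) : cnt s x ≤ s.card :=
  Finset.card_filter_le _ _

lemma cnt_mono (s : Finset ℝ) {x y : ℝ} (h : x ≤ y) : cnt s x ≤ cnt s y := by
  apply Finset.card_le_card
  intro z hz
  rw [Finset.mem_filter] at *
  exact ⟨hz.1, le_trans hz.2 h⟩

lemma cnt_lt {s : Finset ℝ} {u x y : ℝ} (hu : u ∈ s) (hx : x < u) (hy : u ≤ y) :
    cnt s x < cnt s y := by
  apply Finset.card_lt_card
  constructor
  · intro z hz
    rw [Finset.mem_filter] at *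
    exact ⟨hz.1, le_trans hz.2 (le_trans hx.le hy)⟩
  · intro hsub
    have : u ∈ s.filter (· ≤ y) := Finset.mem_filter.mpr ⟨hu, hy⟩
    have := hsub this
    rw [Finset.mem_filter] at this
    exact absurd this.2 (not_le.mpr hx)

lemma cnt_congr_subset {s u : Finset ℝ} (hsu : s ⊆ u) {x y : ℝ}
    (h : cnt u x = cnt u y) : cnt s x = cnt s y := by
  have key : ∀ x y : ℝ, x ≤ y → cnt u x = cnt u y → cnt s x = cnt s y := by
    intro x y hxy h
    have hfil : u.filter (· ≤ x) = u.filter (· ≤ y) := by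
      apply Finset.eq_of_subset_of_card_le
      · intro z hz; rw [Finset.mem_filter] at *; exact ⟨hz.1, le_trans hz.2 hxy⟩
      · exact le_of_eq h.symm
    unfold cnt
    congr 1
    ext z
    simp only [Finset.mem_filter]
    constructor
    · rintro ⟨hzs, hzx⟩; exact ⟨hzs, le_trans hzx hxy⟩
    · rintro ⟨hzs, hzy⟩
      refine ⟨hzs, ?_⟩
      have : z ∈ u.filter (· ≤ y) := Finset.mem_filter.mpr ⟨hsu hzs, hzy⟩
      rw [← hfil, Finset.mem_filter] at this
      exact this.2
  rcases le_total x y with hc | hc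
  · exact key x y hc h
  · exact (key y x hc h.symm).symm

lemma cnt_between {s : Finset ℝ} {x y z : ℝ} (hxz : x ≤ z) (hzy : z ≤ y)
    (h : cnt s x = cnt s y) : cnt s z = cnt s x :=
  le_antisymm (h ▸ cnt_mono s hzy) (cnt_mono s hxz)

/-- `f` is piecewise polynomial with breakpoint set `s` and degree at most `D`. -/
def PW (f : ℝ → ℝ) (s : Finset ℝ) (D : ℕ) : Prop :=
  ∃ q : ℕ → Polynomial ℝ, (∀ k, (q k).natDegree ≤ D) ∧
    ∀ x, f x = (q (cnt s x)).eval x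

lemma PW.mono_deg {f s D D'} (h : PW f s D) (hD : D ≤ D') : PW f s D' := by
  obtain ⟨q, hq, he⟩ := h
  exact ⟨q, fun k => le_trans (hq k) hD, he⟩

lemma PW_const (c : ℝ) (s : Finset ℝ) (D : ℕ) : PW (fun _ => c) s D :=
  ⟨fun _ => C c, fun _ => by simp, fun x => by simp⟩

lemma PW_id (s : Finset ℝ) : PW (fun x => x) s 1 :=
  ⟨fun _ => X, fun _ => by simp, fun x => by simp⟩

lemma PW.smul {f s D} (c : ℝ) (h : PW f s D) : PW (fun x => c * f x) s D := by
  obtain ⟨q, hq, he⟩ := h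
  refine ⟨fun k => C c * q k, fun k => ?_, fun x => by simp [he x]⟩
  exact le_trans (natDegree_mul_le) (by simp [hq k])

lemma PW.of_subset {f s D} (h : PW f s D) {u : Finset ℝ} (hsu : s ⊆ u) :
    PW f u D := by
  obtain ⟨q, hq, he⟩ := h
  refine ⟨fun k => if hk : ∃ x, cnt u x = k then q (cnt s hk.choose) else 0,
    fun k => ?_, fun x => ?_⟩
  · dsimp only
    split
    · exact hq _
    · simp
  · have hk : ∃ y, cnt u y = cnt u x := ⟨x, rfl⟩
    dsimp only
    rw [dif_pos hk, he x]
    congr 2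
    exact (cnt_congr_subset hsu hk.choose_spec).symm

lemma PW.add_same {f g : ℝ → ℝ} {s : Finset ℝ} {D : ℕ} (hf : PW f s D)
    (hg : PW g s D) : PW (fun x => f x + g x) s D := by
  obtain ⟨q, hq, he⟩ := hf
  obtain ⟨q', hq', he'⟩ := hg
  refine ⟨fun k => q k + q' k, fun k => ?_, fun x => by simp [he x, he' x]⟩
  exact le_trans (natDegree_add_le _ _) (max_le (hq k) (hq' k))

lemma PW.add {f g : ℝ → ℝ} {s t : Finset ℝ} {D : ℕ} (hf : PW f s D)
    (hg : PW g t D) : PW (fun x => f x + g x) (s ∪ t) D :=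
  (hf.of_subset Finset.subset_union_left).add_same
    (hg.of_subset Finset.subset_union_right)

lemma PW_sum {ι : Type*} (A : Finset ι) (g : ι → ℝ → ℝ) (T : ι → Finset ℝ)
    (D : ℕ) (h : ∀ i ∈ A, PW (g i) (T i) D) :
    PW (fun x => ∑ i ∈ A, g i x) (A.sup T) D := by
  classical
  induction A using Finset.cons_induction with
  | empty => simpa using (PW_const 0 ∅ 0).mono_deg (Nat.zero_le D)
  | cons a A ha ih =>
    rw [Finset.sup_cons]
    have h1 : PW (g a) (T a) D := h a (Finset.mem_cons_self a A)
    have h2 := ih (fun i hi => h i (Finset.mem_cons_of_mem hi))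
    have := h1.add h2
    refine PW.mono_deg ?_ le_rfl
    convert this using 2 with x
    · exact Finset.sum_cons ha
    · rfl
lemma card_finset_sup_le {ι : Type*} (A : Finset ι) (T : ι → Finset ℝ) :
    (A.sup T).card ≤ ∑ i ∈ A, (T i).card := by
  classical
  induction A using Finset.cons_induction with
  | empty => simp
  | cons a A ha ih =>
    rw [Finset.sup_cons, Finset.sum_cons]
    exact le_trans (Finset.card_union_le _ _) (by omega)


lemma pieceIndex_congr {B : ℕ} {t : Fin B → ℝ} {u₁ u₂ : ℝ}
    (h : ∀ i, t i ≤ u₁ ↔ t i ≤ u₂) : pieceIndex t u₁ = pieceIndex t u₂ := by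
  have hf : (Finset.univ.filter fun i => t i ≤ u₁) =
      (Finset.univ.filter fun i => t i ≤ u₂) := by
    apply Finset.filter_congr
    intro i _
    simp [h i]
  simp [pieceIndex, hf]

lemma PW_comp {ψ g : ℝ → ℝ} {S : Finset ℝ} {D e B : ℕ}
    (t : Fin B → ℝ) (q : Fin (B + 1) → Polynomial ℝ)
    (hq : ∀ i, (q i).natDegree ≤ e)
    (hψ : ∀ u, ψ u = (q (pieceIndex t u)).eval u)
    (hψc : Continuous ψ) (hgc : Continuous g)
    (qg : ℕ → Polynomial ℝ) (hqg : ∀ k, (qg k).natDegree ≤ D)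
    (hg : ∀ x, g x = (qg (cnt S x)).eval x) :
    ∃ S' : Finset ℝ, S ⊆ S' ∧ S'.card ≤ S.card + (S.card + 1) * B * D ∧
      PW (fun x => ψ (g x)) S' (e * D) := by
  set R : Finset ℝ := (Finset.range (S.card + 1) ×ˢ (Finset.univ : Finset (Fin B))).biUnion
      (fun ki => (qg ki.1 - C (t ki.2)).roots.toFinset) with hR
  refine ⟨S ∪ R, Finset.subset_union_left, ?_, ?_⟩
  · refine le_trans (Finset.card_union_le _ _) ?_
    have h1 : R.card ≤ (S.card + 1) * B * D := by
      refine le_trans (Finset.card_biUnion_le) ?_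
      have h2 : ∀ ki ∈ (Finset.range (S.card + 1) ×ˢ (Finset.univ : Finset (Fin B))),
          ((qg ki.1 - C (t ki.2)).roots.toFinset).card ≤ D := by
        intro ki _
        refine le_trans (Multiset.toFinset_card_le _) ?_
        refine le_trans ((qg ki.1 - C (t ki.2)).card_roots') ?_
        refine le_trans (Polynomial.natDegree_sub_le _ _) ?_
        simp [hqg ki.1]
      refine le_trans (Finset.sum_le_sum h2) ?_
      simp [mul_assoc]
    omega
  · -- the piecewise structure
    set S' := S ∪ R with hS'
    have hsub : S ⊆ S' := Finset.subset_union_left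
    refine ⟨fun k => if h : ∃ x, cnt S' x = k then
        (q (pieceIndex t (g (if h2 : ∃ z, cnt S' z = k ∧ ∃ z', cnt S' z' = k ∧ z' < z
            then h2.choose else h.choose)))).comp (qg (cnt S h.choose))
      else 0, fun k => ?_, fun x => ?_⟩
    · dsimp only
      split
      · exact le_trans (Polynomial.natDegree_comp_le) (Nat.mul_le_mul (hq _) (hqg _))
      · simp
    · have h : ∃ y, cnt S' y = cnt S' x := ⟨x, rfl⟩
      dsimp only
      rw [dif_pos h]
      have hx₀p : cnt S' h.choose = cnt S' x := h.choose_spec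
      -- g agrees with the polynomial `qg (cnt S h.choose)` on the whole piece
      have hgp : ∀ y : ℝ, cnt S' y = cnt S' x → g y = (qg (cnt S h.choose)).eval y := by
        intro y hy
        rw [hg y]
        congr 2
        exact cnt_congr_subset hsub (by rw [hy, hx₀p])
      have core : ∀ a b' : ℝ, a ≤ b' → cnt S' a = cnt S' x → cnt S' b' = cnt S' x →
          (∃ a', cnt S' a' = cnt S' x ∧ a' < a) → ∀ i : Fin B, (t i ≤ g a ↔ t i ≤ g b') := by
        intro a b' hab ha hb ha' i
        obtain ⟨a', ha'c, ha'lt⟩ := ha'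
        have hgseg : ∀ y ∈ Set.Icc a b', g y = (qg (cnt S h.choose)).eval y := by
          intro y hy
          exact hgp y ((cnt_between hy.1 hy.2 (ha.trans hb.symm)).trans ha)
        have hcont : ContinuousOn (fun y => (qg (cnt S h.choose)).eval y) (Set.Icc a b') :=
          (Polynomial.continuous _).continuousOn
        have hroot : ∀ u : ℝ, u ∈ Set.Icc a b' → (qg (cnt S h.choose)).eval u = t i →
            (qg (cnt S h.choose) - C (t i) ≠ 0) → False := by
          intro u hu hu2 hne
          have huS' : u ∈ S' := by
            rw [hS']
            refine Finset.mem_union_right _ ?_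
            rw [hR]
            refine Finset.mem_biUnion.mpr ⟨(cnt S h.choose, i), ?_, ?_⟩
            · refine Finset.mem_product.mpr ⟨?_, Finset.mem_univ _⟩
              exact Finset.mem_range.mpr (Nat.lt_succ_of_le (cnt_le_card _ _))
            · rw [Multiset.mem_toFinset, Polynomial.mem_roots hne]
              simp [Polynomial.IsRoot, hu2]
          rcases eq_or_lt_of_le hu.1 with he | hlt
          · have := cnt_lt huS' (he ▸ ha'lt) (le_of_eq he.symm)
            rw [ha'c, ha] at this
            exact lt_irrefl _ this
          · have := cnt_lt huS' hlt hu.2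
            rw [ha, hb] at this
            exact lt_irrefl _ this
        constructor
        · intro hta
          by_contra htb
          push_neg at htb
          have hne : qg (cnt S h.choose) - C (t i) ≠ 0 := by
            intro h0
            have h1 : (qg (cnt S h.choose)).eval b' = t i := by
              have := congrArg (Polynomial.eval b') h0
              simpa [sub_eq_zero] using this
            rw [← hgseg b' (Set.right_mem_Icc.mpr hab)] at h1
            exact absurd h1 (ne_of_lt htb)
          have hmem : t i ∈ Set.Icc ((qg (cnt S h.choose)).eval b')
              ((qg (cnt S h.choose)).eval a) := by
            rw [← hgseg a (Set.left_mem_Icc.mpr hab), ← hgseg b' (Set.right_mem_Icc.mpr hab)]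
            exact ⟨htb.le, hta⟩
          obtain ⟨u, hu, hu2⟩ := intermediate_value_Icc' hab hcont hmem
          exact absurd (hroot u hu hu2 hne) (by simp)
        · intro htb
          by_contra hta
          push_neg at hta
          have hne : qg (cnt S h.choose) - C (t i) ≠ 0 := by
            intro h0
            have h1 : (qg (cnt S h.choose)).eval a = t i := by
              have := congrArg (Polynomial.eval a) h0
              simpa [sub_eq_zero] using this
            rw [← hgseg a (Set.left_mem_Icc.mpr hab)] at h1
            exact absurd h1 (ne_of_lt hta)
          have hmem : t i ∈ Set.Icc ((qg (cnt S h.choose)).eval a)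
              ((qg (cnt S h.choose)).eval b') := by
            rw [← hgseg a (Set.left_mem_Icc.mpr hab), ← hgseg b' (Set.right_mem_Icc.mpr hab)]
            exact ⟨hta.le, htb⟩
          obtain ⟨u, hu, hu2⟩ := intermediate_value_Icc hab hcont hmem
          exact absurd (hroot u hu hu2 hne) (by simp)
      by_cases h2 : ∃ z, cnt S' z = cnt S' x ∧ ∃ z', cnt S' z' = cnt S' x ∧ z' < z
      · rw [dif_pos h2]
        obtain ⟨hz1, hz2⟩ := h2.choose_spec
        have key : ∀ y, cnt S' y = cnt S' x → (∃ y', cnt S' y' = cnt S' x ∧ y' < y) →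
            pieceIndex t (g y) = pieceIndex t (g h2.choose) := by
          intro y hy hy'
          rcases le_total y h2.choose with hyz | hzy
          · exact pieceIndex_congr (core y h2.choose hyz hy hz1 hy')
          · exact (pieceIndex_congr (core h2.choose y hzy hz1 hy hz2)).symm
        by_cases hmin : ∃ x', cnt S' x' = cnt S' x ∧ x' < x
        · rw [Polynomial.eval_comp, hψ (g x), key x rfl hmin]
          congr 1
          exact hgp x rfl
        · -- x is the minimum of its piece
          have hxz : x < h2.choose := by
            rcases lt_trichotomy x h2.choose with hc | hc | hc
            · exact hc
            · exfalso
              obtain ⟨z', hz'1, hz'2⟩ := hz2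
              exact hmin ⟨z', hz'1, hc ▸ hz'2⟩
            · exact absurd ⟨h2.choose, hz1, hc⟩ hmin
          have hioc : ∀ y ∈ Set.Ioc x h2.choose,
              ψ (g y) = (q (pieceIndex t (g h2.choose))).eval
                ((qg (cnt S h.choose)).eval y) := by
            intro y hy
            have hcy : cnt S' y = cnt S' x := cnt_between hy.1.le hy.2 hz1.symm
            rw [hψ (g y), key y hcy ⟨x, rfl, hy.1⟩, hgp y hcy]
          have hne : (nhdsWithin x (Set.Ioc x h2.choose)).NeBot := by
            rw [nhdsWithin_Ioc_eq_nhdsGT hxz]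
            exact nhdsGT_neBot x
          have T1 : Filter.Tendsto (fun y => ψ (g y)) (nhdsWithin x (Set.Ioc x h2.choose))
              (nhds (ψ (g x))) :=
            ((hψc.comp hgc).tendsto x).mono_left nhdsWithin_le_nhds
          have T2 : Filter.Tendsto
              (fun y => (q (pieceIndex t (g h2.choose))).eval ((qg (cnt S h.choose)).eval y))
              (nhdsWithin x (Set.Ioc x h2.choose))
              (nhds ((q (pieceIndex t (g h2.choose))).eval ((qg (cnt S h.choose)).eval x))) := by
            have hcont2 : Continuous
                (fun y => (q (pieceIndex t (g h2.choose))).eval ((qg (cnt S h.choose)).eval y)) :=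
              (Polynomial.continuous _).comp (Polynomial.continuous _)
            exact (hcont2.tendsto x).mono_left nhdsWithin_le_nhds
          have heq : ψ (g x) = (q (pieceIndex t (g h2.choose))).eval
              ((qg (cnt S h.choose)).eval x) := by
            haveI := hne
            refine tendsto_nhds_unique ?_ T2
            exact T1.congr' (Filter.eventuallyEq_of_mem self_mem_nhdsWithin hioc)
          rw [Polynomial.eval_comp]
          exact heq
      · rw [dif_neg h2]
        have hxx₀ : h.choose = x := by
          rcases lt_trichotomy h.choose x with hc | hc | hc
          · exact absurd ⟨x, rfl, h.choose, hx₀p, hc⟩ h2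
          · exact hc
          · exact absurd ⟨h.choose, hx₀p, x, rfl, hc⟩ h2
        rw [Polynomial.eval_comp, hψ (g x), hxx₀]
        congr 1
        exact (hg x).symm ▸ rfl


lemma counting {f : ℝ → ℝ} (hc : Continuous f) {S : Finset ℝ} {D : ℕ}
    (hD : 1 ≤ D) (hPW : PW f S D) (n : ℕ)
    (hf : ∀ i : ℕ, i < n → (i % 2 = 0 → f i < 1 / 2) ∧ (i % 2 = 1 → 1 / 2 < f i)) :
    n ≤ (S.card + 1) * (D + 1) := by
  by_contra hcon
  push_neg at hcon
  have hn2 : 2 ≤ n := by nlinarith [S.card.zero_le, hD]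
  -- for each i < n - 1 there is a root of f - 1/2 in (i, i+1)
  have hroot : ∀ i : Fin (n - 1), ∃ r : ℝ, r ∈ Set.Ioo (i.1 : ℝ) ((i.1 : ℝ) + 1) ∧
      f r = 1 / 2 := by
    intro i
    have hi1 : i.1 + 1 < n := by omega
    have hi0 : i.1 < n := by omega
    have hcO : ContinuousOn f (Set.Icc (i.1 : ℝ) ((i.1 : ℝ) + 1)) := hc.continuousOn
    have hle : (i.1 : ℝ) ≤ (i.1 : ℝ) + 1 := by linarith
    rcases Nat.even_or_odd i.1 with he | ho
    · have h1 : f i.1 < 1 / 2 := (hf i.1 hi0).1 (Nat.even_iff.mp he)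
      have h2 : 1 / 2 < f ((i.1 : ℝ) + 1) := by
        have hmod : (i.1 + 1) % 2 = 1 := by
          have := Nat.even_iff.mp he; omega
        have h3 := (hf (i.1 + 1) hi1).2 hmod
        have hcast : ((i.1 + 1 : ℕ) : ℝ) = (i.1 : ℝ) + 1 := by push_cast; ring
        rwa [hcast] at h3
      have hm : (1 / 2 : ℝ) ∈ Set.Ioo (f i.1) (f ((i.1 : ℝ) + 1)) := ⟨h1, h2⟩
      obtain ⟨r, hr, hfr⟩ := intermediate_value_Ioo hle hcO hm
      exact ⟨r, hr, hfr⟩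
    · have h1 : 1 / 2 < f i.1 := (hf i.1 hi0).2 (Nat.odd_iff.mp ho)
      have h2 : f ((i.1 : ℝ) + 1) < 1 / 2 := by
        have hmod : (i.1 + 1) % 2 = 0 := by
          have := Nat.odd_iff.mp ho; omega
        have h3 := (hf (i.1 + 1) hi1).1 hmod
        have hcast : ((i.1 + 1 : ℕ) : ℝ) = (i.1 : ℝ) + 1 := by push_cast; ring
        rwa [hcast] at h3
      have hm : (1 / 2 : ℝ) ∈ Set.Ioo (f ((i.1 : ℝ) + 1)) (f i.1) := ⟨h2, h1⟩
      obtain ⟨r, hr, hfr⟩ := intermediate_value_Ioo' hle hcO hm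
      exact ⟨r, hr, hfr⟩
  choose r hr hfr using hroot
  obtain ⟨q, hq, he⟩ := hPW
  -- pigeonhole
  have hmaps : ∀ i ∈ (Finset.univ : Finset (Fin (n - 1))),
      cnt S (r i) ∈ Finset.range (S.card + 1) := by
    intro i _
    exact Finset.mem_range.mpr (Nat.lt_succ_of_le (cnt_le_card _ _))
  have hcard : (Finset.range (S.card + 1)).card * D <
      (Finset.univ : Finset (Fin (n - 1))).card := by
    simp only [Finset.card_range, Finset.card_univ, Fintype.card_fin]
    have hx : (S.card + 1) * (D + 1) = (S.card + 1) * D + (S.card + 1) := by ring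
    omega
  obtain ⟨k, hk, hfib⟩ :=
    Finset.exists_lt_card_fiber_of_mul_lt_card_of_maps_to hmaps hcard
  set G := Finset.univ.filter fun i : Fin (n - 1) => cnt S (r i) = k with hG
  have hG2 : 1 < G.card := by omega
  obtain ⟨i₁, hi₁, i₂, hi₂, hne⟩ := Finset.one_lt_card.mp hG2
  -- order them
  have hrmono : ∀ i j : Fin (n - 1), i < j → r i < r j := by
    intro i j hij
    have h1 := (hr i).2
    have h2 := (hr j).1
    have : (i.1 : ℝ) + 1 ≤ (j.1 : ℝ) := by
      have : i.1 + 1 ≤ j.1 := hij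
      exact_mod_cast this
    linarith
  -- wlog i₁ < i₂
  obtain ⟨a, ha, b, hb, hab⟩ : ∃ a, a ∈ G ∧ ∃ b, b ∈ G ∧ a < b := by
    rcases lt_or_gt_of_ne hne with hc | hc
    · exact ⟨i₁, hi₁, i₂, hi₂, hc⟩
    · exact ⟨i₂, hi₂, i₁, hi₁, hc⟩
  have hca : cnt S (r a) = k := (Finset.mem_filter.mp ha).2
  have hcb : cnt S (r b) = k := (Finset.mem_filter.mp hb).2
  -- the integer point a+1 lies strictly between r a and r b and is in the same piece
  set y : ℝ := (a.1 : ℝ) + 1 with hy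
  have hy1 : r a < y := (hr a).2
  have hy2 : y ≤ r b := by
    have h2 := (hr b).1
    have : (a.1 : ℝ) + 1 ≤ (b.1 : ℝ) := by
      have : a.1 + 1 ≤ b.1 := hab
      exact_mod_cast this
    linarith
  have hcy : cnt S y = k := by
    rw [← hca]
    exact cnt_between hy1.le hy2 (hca.trans hcb.symm)
  -- f y ≠ 1/2
  have hyn : a.1 + 1 < n := by omega
  have hfy : f y ≠ 1 / 2 := by
    have hcast : ((a.1 + 1 : ℕ) : ℝ) = y := by push_cast [hy]; ring
    rcases Nat.even_or_odd (a.1 + 1) with hev | hod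
    · have := (hf (a.1 + 1) hyn).1 (Nat.even_iff.mp hev)
      rw [hcast] at this
      exact ne_of_lt this
    · have := (hf (a.1 + 1) hyn).2 (Nat.odd_iff.mp hod)
      rw [hcast] at this
      exact (ne_of_lt this).symm
  -- the polynomial on this piece
  set P : Polynomial ℝ := q k - C (1 / 2) with hP
  have hPne : P ≠ 0 := by
    intro h0
    have : P.eval y = 0 := by rw [h0]; simp
    rw [hP] at this
    simp only [Polynomial.eval_sub, Polynomial.eval_C] at this
    have : (q k).eval y = 1 / 2 := by linarith
    rw [← hcy] at this
    exact hfy ((he y).trans this)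
  have hPdeg : P.natDegree ≤ D := by
    refine le_trans (Polynomial.natDegree_sub_le _ _) ?_
    simp [hq k]
  -- all roots
  have hPr : ∀ i ∈ G, P.eval (r i) = 0 := by
    intro i hi
    have hci : cnt S (r i) = k := (Finset.mem_filter.mp hi).2
    rw [hP]
    simp only [Polynomial.eval_sub, Polynomial.eval_C]
    have := (he (r i)).symm
    rw [hci] at this
    rw [this, hfr i]
    ring
  have hinj : Set.InjOn r G := by
    intro i hi j hj hij
    by_contra hne2
    rcases lt_or_gt_of_ne hne2 with hc | hc
    · exact absurd hij (ne_of_lt (hrmono i j hc))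
    · exact absurd hij.symm (ne_of_lt (hrmono j i hc))
  have hsub : G.image r ⊆ P.roots.toFinset := by
    intro x hx
    obtain ⟨i, hi, rfl⟩ := Finset.mem_image.mp hx
    rw [Multiset.mem_toFinset, Polynomial.mem_roots hPne]
    exact hPr i hi
  have hcard2 : G.card ≤ D := by
    calc G.card = (G.image r).card := (Finset.card_image_of_injOn hinj).symm
    _ ≤ P.roots.toFinset.card := Finset.card_le_card hsub
    _ ≤ Multiset.card P.roots := Multiset.toFinset_card_le _
    _ ≤ P.natDegree := P.card_roots'
    _ ≤ D := hPdeg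
  omega


lemma PW_def {f : ℝ → ℝ} {s : Finset ℝ} {D : ℕ} : PW f s D ↔
    ∃ q : ℕ → Polynomial ℝ, (∀ k, (q k).natDegree ≤ D) ∧
      ∀ x, f x = (q (cnt s x)).eval x := Iff.rfl

namespace NNArch
variable (N : NNArch)

lemma incoming_input_eq_empty {v : Fin N.numNodes} (hv : (v : ℕ) < N.numInputs) :
    N.incoming v = ∅ := by
  rw [incoming, Finset.filter_eq_empty_iff]
  intro e he hev
  have h := N.hTarget e he
  rw [hev] at h
  omega

lemma layer_eq (v : Fin N.numNodes) :
    N.layer v = (N.incoming v).attach.sup fun e => N.layer e.1.1 + 1 := by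
  rw [layer]

lemma layer_input {v : Fin N.numNodes} (hv : (v : ℕ) < N.numInputs) :
    N.layer v = 0 := by
  rw [layer_eq, incoming_input_eq_empty N hv]
  simp

lemma layer_lt_of_edge {e : Fin N.numNodes × Fin N.numNodes} (he : e ∈ N.edges) :
    N.layer e.1 < N.layer e.2 := by
  have hmem : e ∈ N.incoming e.2 := Finset.mem_filter.mpr ⟨he, rfl⟩
  have h := Finset.le_sup (f := fun e' : {x // x ∈ N.incoming e.2} => N.layer e'.1.1 + 1)
    (Finset.mem_attach _ ⟨e, hmem⟩)
  rw [← layer_eq] at h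
  have h' : N.layer e.1 + 1 ≤ N.layer e.2 := by simpa using h
  omega

lemma exists_pred_of_layer_pos {v : Fin N.numNodes} (hv : 1 ≤ N.layer v) :
    ∃ e ∈ N.edges, e.2 = v ∧ N.layer e.1 + 1 = N.layer v := by
  have hne : (N.incoming v).attach.Nonempty := by
    rw [Finset.attach_nonempty_iff]
    by_contra hc
    rw [Finset.not_nonempty_iff_eq_empty] at hc
    rw [layer_eq, hc] at hv
    simp at hv
  obtain ⟨e, _, hsup⟩ := Finset.exists_mem_eq_sup _ hne
    (fun e' : {x // x ∈ N.incoming v} => N.layer e'.1.1 + 1)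
  rw [← layer_eq] at hsup
  have hmem := Finset.mem_filter.mp e.2
  exact ⟨e.1, hmem.1, hmem.2, hsup.symm⟩

lemma unit_of_layer_pos {v : Fin N.numNodes} (hv : 1 ≤ N.layer v) :
    N.numInputs ≤ (v : ℕ) := by
  obtain ⟨e, he, hev, _⟩ := N.exists_pred_of_layer_pos hv
  have := N.hTarget e he
  rw [hev] at this
  exact this

lemma incoming_empty_of_layer_zero {v : Fin N.numNodes} (hv : N.layer v = 0) :
    N.incoming v = ∅ := by
  by_contra hc
  rw [← Finset.not_nonempty_iff_eq_empty, not_not] at hc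
  obtain ⟨e, he⟩ := hc
  have hmem := Finset.mem_filter.mp he
  have h := N.layer_lt_of_edge hmem.1
  rw [hmem.2, hv] at h
  omega

lemma exists_node_layer : ∀ (k : ℕ) (v : Fin N.numNodes), (v : ℕ) < k →
    ∀ j ≤ N.layer v, ∃ u : Fin N.numNodes, N.layer u = j := by
  intro k
  induction k with
  | zero => intro v hv; omega
  | succ k ih =>
    intro v hv j hj
    rcases eq_or_lt_of_le hj with he | hlt
    · exact ⟨v, he.symm⟩
    · have hpos : 1 ≤ N.layer v := by omega
      obtain ⟨e, he, hev, hle⟩ := N.exists_pred_of_layer_pos hpos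
      have hidx : (e.1 : ℕ) < k := by
        have h1 := N.hTopo e he
        rw [Fin.lt_def, hev] at h1
        omega
      exact ih e.1 hidx j (by omega)

/-- units in layer `ℓ` -/
noncomputable def layerUnits (ℓ : ℕ) : Finset (Fin N.numNodes) :=
  Finset.univ.filter fun v => N.numInputs ≤ (v : ℕ) ∧ N.layer v = ℓ

/-- recursive global bound on piece counts -/
noncomputable def Abnd (p d : ℕ) : ℕ → ℕ
  | 0 => 0
  | ℓ + 1 => Abnd p d ℓ + (N.layerUnits (ℓ + 1)).card * (p * d ^ ℓ * (1 + Abnd p d ℓ))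

/-- per-node bound on the number of pieces -/
noncomputable def pb (p d : ℕ) (v : Fin N.numNodes) : ℕ :=
  if N.layer v = 0 then 1
  else p * d ^ (N.layer v - 1) * (1 + N.Abnd p d (N.layer v - 1))

lemma pb_pos {p d : ℕ} (hp : 1 ≤ p) (hd : 1 ≤ d) (v : Fin N.numNodes) :
    1 ≤ N.pb p d v := by
  rw [pb]
  split
  · omega
  · have h1 : 1 ≤ d ^ (N.layer v - 1) := Nat.one_le_pow _ _ hd
    have : 1 * 1 * 1 ≤ p * d ^ (N.layer v - 1) * (1 + N.Abnd p d (N.layer v - 1)) :=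
      Nat.mul_le_mul (Nat.mul_le_mul hp h1) (by omega)
    omega

lemma sum_pb_le {p d : ℕ} (hp : 1 ≤ p) (hd : 1 ≤ d) (P : Finset (Fin N.numNodes))
    (ℓ : ℕ) (hP : ∀ u ∈ P, N.layer u ≤ ℓ) :
    ∑ u ∈ P, (N.pb p d u - 1) ≤ N.Abnd p d ℓ := by
  induction ℓ generalizing P with
  | zero =>
    have : ∀ u ∈ P, N.pb p d u - 1 = 0 := by
      intro u hu
      have h0 : N.layer u = 0 := Nat.le_zero.mp (hP u hu)
      rw [pb, if_pos h0]
    rw [Finset.sum_congr rfl this]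
    simp [Abnd]
  | succ ℓ ih =>
    rw [← Finset.sum_filter_add_sum_filter_not P (fun u => N.layer u ≤ ℓ)]
    have h1 := ih (P.filter fun u => N.layer u ≤ ℓ) (fun u hu => (Finset.mem_filter.mp hu).2)
    have h2 : ∀ u ∈ P.filter (fun u => ¬ N.layer u ≤ ℓ),
        N.pb p d u - 1 ≤ p * d ^ ℓ * (1 + N.Abnd p d ℓ) := by
      intro u hu
      have hu1 := Finset.mem_filter.mp hu
      have hlay : N.layer u = ℓ + 1 := by
        have := hP u hu1.1
        omega
      rw [pb, if_neg (by omega)]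
      simp [hlay]
    have h3 : (P.filter (fun u => ¬ N.layer u ≤ ℓ)).card ≤ (N.layerUnits (ℓ + 1)).card := by
      apply Finset.card_le_card
      intro u hu
      have hu1 := Finset.mem_filter.mp hu
      have hlay : N.layer u = ℓ + 1 := by
        have := hP u hu1.1
        omega
      rw [layerUnits, Finset.mem_filter]
      exact ⟨Finset.mem_univ _, N.unit_of_layer_pos (by omega), hlay⟩
    have h4 := Finset.sum_le_card_nsmul _ _ _ h2
    rw [smul_eq_mul] at h4
    have h5 : (P.filter (fun u => ¬ N.layer u ≤ ℓ)).card * (p * d ^ ℓ * (1 + N.Abnd p d ℓ))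
        ≤ (N.layerUnits (ℓ + 1)).card * (p * d ^ ℓ * (1 + N.Abnd p d ℓ)) :=
      Nat.mul_le_mul_right _ h3
    show _ ≤ N.Abnd p d (ℓ + 1)
    rw [Abnd]
    omega

end NNArch


namespace NNArch

lemma value_input (N : NNArch) (w : Fin N.numNodes × Fin N.numNodes → ℝ)
    (b : Fin N.numNodes → ℝ) (x : Fin N.numInputs → ℝ) {v : Fin N.numNodes}
    (hv : (v : ℕ) < N.numInputs) : N.value w b x v = x ⟨v, hv⟩ := by
  rw [value]
  simp [hv]

lemma value_unfold (N : NNArch) (w : Fin N.numNodes × Fin N.numNodes → ℝ)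
    (b : Fin N.numNodes → ℝ) (x : Fin N.numInputs → ℝ) (v : Fin N.numNodes)
    (hv : N.numInputs ≤ (v : ℕ)) :
    N.value w b x v =
      (if (v : ℕ) = N.numNodes - 1
        then (∑ e ∈ (N.incoming v).attach, w e.1 * N.value w b x e.1.1) + b v
        else N.act v ((∑ e ∈ (N.incoming v).attach, w e.1 * N.value w b x e.1.1) + b v)) := by
  rw [value]
  rw [dif_neg (by omega)]

end NNArch


namespace NNArch

lemma node_claim (N : NNArch) (p d : ℕ) (hp : 1 ≤ p) (hd : 1 ≤ d)
    (hact : ∀ v : Fin N.numNodes, N.numInputs ≤ (v : ℕ) → (v : ℕ) ≠ N.numNodes - 1 →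
      Continuous (N.act v) ∧ PiecewisePoly (N.act v) p d)
    (w : Fin N.numNodes × Fin N.numNodes → ℝ) (b : Fin N.numNodes → ℝ) :
    ∀ v : Fin N.numNodes,
      Continuous (fun x : ℝ => N.value w b (fun _ => x) v) ∧
      ∃ S : Finset ℝ, PW (fun x : ℝ => N.value w b (fun _ => x) v) S (d ^ N.layer v) ∧
        S.card + 1 ≤ N.pb p d v := by
  suffices H : ∀ k (v : Fin N.numNodes), (v : ℕ) < k →
      Continuous (fun x : ℝ => N.value w b (fun _ => x) v) ∧
      ∃ S : Finset ℝ, PW (fun x : ℝ => N.value w b (fun _ => x) v) S (d ^ N.layer v) ∧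
        S.card + 1 ≤ N.pb p d v by
    exact fun v => H ((v : ℕ) + 1) v (Nat.lt_succ_self _)
  intro k
  induction k with
  | zero => exact fun v hv => absurd hv (Nat.not_lt_zero _)
  | succ k ih =>
    intro v hv
    by_cases hvk : (v : ℕ) < k
    · exact ih v hvk
    by_cases hin : (v : ℕ) < N.numInputs
    · -- input node
      have hval : (fun x : ℝ => N.value w b (fun _ => x) v) = fun x => x := by
        funext x
        rw [N.value_input w b _ hin]
      rw [hval]
      refine ⟨continuous_id, ∅, ?_, ?_⟩
      · have hl : N.layer v = 0 := N.layer_input hin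
        rw [hl, pow_zero]
        exact PW_id ∅
      · rw [pb, if_pos (N.layer_input hin)]
        simp
    · push_neg at hin
      by_cases h0 : N.layer v = 0
      · -- computation unit with no inputs: constant
        have hinc : N.incoming v = ∅ := N.incoming_empty_of_layer_zero h0
        have hsum : ∀ x : Fin N.numInputs → ℝ,
            (∑ e ∈ (N.incoming v).attach, w e.1 * N.value w b x e.1.1) = 0 := by
          intro x
          rw [Finset.sum_attach (N.incoming v) (fun e => w e * N.value w b x e.1), hinc,
            Finset.sum_empty]
        by_cases hout : (v : ℕ) = N.numNodes - 1
        · have hval : (fun x : ℝ => N.value w b (fun _ => x) v) = fun _ => b v := by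
            funext x
            rw [N.value_unfold w b _ v hin, if_pos hout, hsum, zero_add]
          rw [hval]
          exact ⟨continuous_const, ∅, PW_const _ _ _, by rw [pb, if_pos h0]; simp⟩
        · have hval : (fun x : ℝ => N.value w b (fun _ => x) v) = fun _ => N.act v (b v) := by
            funext x
            rw [N.value_unfold w b _ v hin, if_neg hout, hsum, zero_add]
          rw [hval]
          exact ⟨continuous_const, ∅, PW_const _ _ _, by rw [pb, if_pos h0]; simp⟩
      · -- main case : layer ≥ 1
        have hl1 : 1 ≤ N.layer v := by omega
        have hpre : ∀ e : {x // x ∈ N.incoming v},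
            Continuous (fun x : ℝ => N.value w b (fun _ => x) e.1.1) ∧
            ∃ S : Finset ℝ, PW (fun x : ℝ => N.value w b (fun _ => x) e.1.1) S
              (d ^ (N.layer v - 1)) ∧ S.card + 1 ≤ N.pb p d e.1.1 := by
          intro e
          have hmem := Finset.mem_filter.mp e.2
          have hidx : (e.1.1 : ℕ) < k := by
            have h1 := N.hTopo e.1 hmem.1
            rw [Fin.lt_def, hmem.2] at h1
            omega
          obtain ⟨hc, S, hPW, hcard⟩ := ih e.1.1 hidx
          refine ⟨hc, S, hPW.mono_deg ?_, hcard⟩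
          apply Nat.pow_le_pow_right hd
          have h2 := N.layer_lt_of_edge hmem.1
          rw [hmem.2] at h2
          omega
        have hcontpre := fun e => (hpre e).1
        choose TS hTS hTcard using fun e => (hpre e).2
        set sfun : ℝ → ℝ := fun x =>
          (∑ e ∈ (N.incoming v).attach, w e.1 * N.value w b (fun _ => x) e.1.1) + b v
          with hsfun
        have hscont : Continuous sfun := by
          apply Continuous.add _ continuous_const
          apply continuous_finset_sum
          intro e _
          exact continuous_const.mul (hcontpre e)
        have hsPW : PW sfun ((N.incoming v).attach.sup TS) (d ^ (N.layer v - 1)) := by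
          apply PW.add_same _ (PW_const (b v) _ _)
          exact PW_sum _ _ TS _ (fun e _ => (hTS e).smul (w e.1))
        have hScard : ((N.incoming v).attach.sup TS).card ≤ N.Abnd p d (N.layer v - 1) := by
          refine le_trans (card_finset_sup_le _ _) ?_
          have h1 : ∀ e ∈ (N.incoming v).attach, (TS e).card ≤ N.pb p d e.1.1 - 1 := by
            intro e _
            have := hTcard e
            omega
          refine le_trans (Finset.sum_le_sum h1) ?_
          have h2 : ∑ e ∈ (N.incoming v).attach, (N.pb p d e.1.1 - 1) =
              ∑ e ∈ N.incoming v, (N.pb p d e.1 - 1) :=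
            Finset.sum_attach (N.incoming v) (fun e => N.pb p d e.1 - 1)
          rw [h2]
          have h3 : ∑ u ∈ (N.incoming v).image Prod.fst, (N.pb p d u - 1) =
              ∑ e ∈ N.incoming v, (N.pb p d e.1 - 1) := by
            apply Finset.sum_image
            intro e1 he1 e2 he2 hf
            have h4 := (Finset.mem_filter.mp he1).2
            have h5 := (Finset.mem_filter.mp he2).2
            exact Prod.ext hf (h4.trans h5.symm)
          rw [← h3]
          apply N.sum_pb_le hp hd
          intro u hu
          obtain ⟨e, he, rfl⟩ := Finset.mem_image.mp hu
          have hmem := Finset.mem_filter.mp he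
          have h6 := N.layer_lt_of_edge hmem.1
          rw [hmem.2] at h6
          omega
        by_cases hout : (v : ℕ) = N.numNodes - 1
        · -- output unit : no activation
          have hval : (fun x : ℝ => N.value w b (fun _ => x) v) = sfun := by
            funext x
            rw [N.value_unfold w b _ v hin, if_pos hout]
          rw [hval]
          refine ⟨hscont, _, hsPW.mono_deg (Nat.pow_le_pow_right hd (by omega)), ?_⟩
          rw [pb, if_neg h0]
          have h4 : 0 < p * d ^ (N.layer v - 1) :=
            Nat.mul_pos hp (Nat.pow_pos hd)
          have h5 : 1 + N.Abnd p d (N.layer v - 1) ≤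
              p * d ^ (N.layer v - 1) * (1 + N.Abnd p d (N.layer v - 1)) :=
            Nat.le_mul_of_pos_left _ h4
          omega
        · -- interior unit : apply the activation function
          obtain ⟨hψc, hPP⟩ := hact v hin hout
          obtain ⟨B, t, qψ, hBp, htm, hqd, hψ⟩ := hPP
          obtain ⟨qg, hqg, hgev⟩ := PW_def.mp hsPW
          obtain ⟨S', hsub, hcard', hPW'⟩ := PW_comp t qψ hqd hψ hψc hscont qg hqg hgev
          have hval : (fun x : ℝ => N.value w b (fun _ => x) v) =
              fun x => N.act v (sfun x) := by
            funext x
            rw [N.value_unfold w b _ v hin, if_neg hout]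
          rw [hval]
          refine ⟨hψc.comp hscont, S', ?_, ?_⟩
          · have hdd : d * d ^ (N.layer v - 1) = d ^ N.layer v := by
              rw [← pow_succ']
              congr 1
              omega
            exact hdd ▸ hPW'
          · rw [pb, if_neg h0]
            set a := ((N.incoming v).attach.sup TS).card with ha
            set A := N.Abnd p d (N.layer v - 1) with hA
            set Dp := d ^ (N.layer v - 1) with hDp'
            have hDp : 1 ≤ Dp := Nat.one_le_pow _ _ hd
            have hBP : B ≤ p - 1 := by omega
            calc S'.card + 1 ≤ (a + (a + 1) * B * Dp) + 1 := by omega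
              _ = (a + 1) * (1 + B * Dp) := by ring
              _ ≤ (A + 1) * (1 + B * Dp) := Nat.mul_le_mul_right _ (by omega)
              _ ≤ (A + 1) * (1 + (p - 1) * Dp) :=
                  Nat.mul_le_mul_left _ (Nat.add_le_add_left (Nat.mul_le_mul_right _ hBP) _)
              _ ≤ (A + 1) * (p * Dp) := by
                  apply Nat.mul_le_mul_left
                  have hps : p - 1 + 1 = p := by omega
                  have h7 : (p - 1 + 1) * Dp = (p - 1) * Dp + Dp := by ring
                  rw [hps] at h7
                  omega
              _ = p * Dp * (1 + A) := by ring

end NNArch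


namespace NNArch

lemma abnd_le_prod (N : NNArch) {p d : ℕ} (hp : 1 ≤ p) (hd : 1 ≤ d) (ℓ : ℕ)
    (hne : ∀ j, 1 ≤ j → j ≤ ℓ → 1 ≤ (N.layerUnits j).card) :
    1 + N.Abnd p d ℓ ≤ ∏ j ∈ Finset.range ℓ, (2 * (N.layerUnits (j + 1)).card * p * d ^ j) := by
  induction ℓ with
  | zero => simp [Abnd]
  | succ ℓ ih =>
    have hih := ih (fun j h1 h2 => hne j h1 (by omega))
    rw [Finset.prod_range_succ]
    show 1 + N.Abnd p d (ℓ + 1) ≤ _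
    rw [Abnd]
    have hn : 1 ≤ (N.layerUnits (ℓ + 1)).card := hne (ℓ + 1) (by omega) (by omega)
    set n := (N.layerUnits (ℓ + 1)).card with hnd
    set A := N.Abnd p d ℓ with hAd
    have key : 1 + (A + n * (p * d ^ ℓ * (1 + A))) ≤ (1 + A) * (2 * n * p * d ^ ℓ) := by
      have h1 : 1 ≤ p * d ^ ℓ := Nat.one_le_iff_ne_zero.mpr (by positivity)
      have hXle : (1 + A) ≤ n * (p * d ^ ℓ) * (1 + A) :=
        Nat.le_mul_of_pos_left _ (by positivity)
      have e1 : 1 + (A + n * (p * d ^ ℓ * (1 + A))) = (1 + A) + n * (p * d ^ ℓ) * (1 + A) := by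
        ring
      have e2 : (1 + A) * (2 * n * p * d ^ ℓ) = 2 * (n * (p * d ^ ℓ) * (1 + A)) := by ring
      omega
    refine le_trans key ?_
    exact Nat.mul_le_mul_right _ hih

lemma card_units (N : NNArch) :
    (Finset.univ.filter fun v : Fin N.numNodes => N.numInputs ≤ (v : ℕ)).card = N.numUnits := by
  have h1 : (Finset.univ.filter fun v : Fin N.numNodes => N.numInputs ≤ (v : ℕ)) =
      Finset.Ici (⟨N.numInputs, N.hIn⟩ : Fin N.numNodes) := by
    ext v
    simp [Fin.le_def]
  rw [h1, Fin.card_Ici]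
  rfl

lemma layerUnits_le_numUnits (N : NNArch) (k : ℕ) :
    ∑ j ∈ Finset.range k, (N.layerUnits (j + 1)).card ≤ N.numUnits := by
  classical
  have hdisj : ∀ j1 ∈ Finset.range k, ∀ j2 ∈ Finset.range k, j1 ≠ j2 →
      Disjoint (N.layerUnits (j1 + 1)) (N.layerUnits (j2 + 1)) := by
    intro j1 _ j2 _ hne
    rw [Finset.disjoint_left]
    intro v hv1 hv2
    rw [layerUnits, Finset.mem_filter] at hv1 hv2
    omega
  rw [← Finset.card_biUnion hdisj]
  rw [← N.card_units]
  apply Finset.card_le_card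
  intro v hv
  rw [Finset.mem_biUnion] at hv
  obtain ⟨j, _, hj⟩ := hv
  rw [layerUnits, Finset.mem_filter] at hj
  exact Finset.mem_filter.mpr ⟨Finset.mem_univ _, hj.2.1⟩

lemma layers_nonempty (N : NNArch) (j : ℕ) (hj1 : 1 ≤ j) (hj2 : j ≤ N.depth) :
    1 ≤ (N.layerUnits j).card := by
  obtain ⟨u, hu⟩ := N.exists_node_layer ((N.outNode : ℕ) + 1) N.outNode
    (Nat.lt_succ_self _) j hj2
  have hunit : N.numInputs ≤ (u : ℕ) := N.unit_of_layer_pos (by omega)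
  have : u ∈ N.layerUnits j := by
    rw [layerUnits, Finset.mem_filter]
    exact ⟨Finset.mem_univ _, hunit, hu⟩
  exact Finset.card_pos.mpr ⟨u, this⟩

lemma depth_le_numUnits (N : NNArch) (hL : 1 ≤ N.depth) : N.depth ≤ N.numUnits := by
  have h1 : ∀ j ∈ Finset.range N.depth, 1 ≤ (N.layerUnits (j + 1)).card := by
    intro j hj
    rw [Finset.mem_range] at hj
    exact N.layers_nonempty (j + 1) (by omega) (by omega)
  have h2 := Finset.sum_le_sum h1
  have h3 := N.layerUnits_le_numUnits N.depth
  simp only [Finset.sum_const, Finset.card_range, smul_eq_mul, mul_one] at h2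
  omega

end NNArch


open Real in
set_option maxHeartbeats 1000000 in
lemma final_arith (p d W L m A : ℕ) (hp : 1 ≤ p) (hd : 1 ≤ d)
    (hL : 1 ≤ L) (hLW : L ≤ W) (nf : ℕ → ℕ)
    (hnW : ∑ j ∈ Finset.range (L - 1), nf j ≤ W)
    (hmain : 2 ^ m ≤ (p * d ^ (L - 1) * A) * (d ^ L + 1))
    (hA : A ≤ ∏ j ∈ Finset.range (L - 1), (2 * nf j * p * d ^ j)) :
    (m : ℝ) ≤ (L : ℝ) *
      Real.logb 2 (13 * (p : ℝ) * (d : ℝ) ^ (((L : ℝ) + 1) / 2) * (W : ℝ) / (L : ℝ)) := by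
  have hd1 : (1 : ℝ) ≤ d := by exact_mod_cast hd
  have hp1 : (1 : ℝ) ≤ p := by exact_mod_cast hp
  have hL0 : (0 : ℝ) < L := by exact_mod_cast hL
  have hW1 : (1 : ℝ) ≤ W := by exact_mod_cast le_trans hL hLW
  have hd0 : (0 : ℝ) ≤ d := by linarith
  set dr : ℝ := (d : ℝ) ^ (((L : ℝ) + 1) / 2) with hdr
  have hdr1 : (1 : ℝ) ≤ dr := by
    rw [hdr]
    calc (1:ℝ) = (d:ℝ) ^ (0:ℝ) := by rw [Real.rpow_zero]
    _ ≤ (d:ℝ) ^ (((L : ℝ) + 1) / 2) := Real.rpow_le_rpow_of_exponent_le hd1 (by positivity)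
  set K : ℝ := 13 * (p : ℝ) * dr * (W : ℝ) / (L : ℝ) with hK
  have hLW' : (L : ℝ) ≤ W := by exact_mod_cast hLW
  have hK1 : (1 : ℝ) ≤ K := by
    rw [hK, le_div_iff₀ hL0, one_mul]
    have h13 : (1:ℝ) ≤ 13*(p:ℝ)*dr := by nlinarith
    calc (L:ℝ) ≤ W := hLW'
      _ = 1 * W := (one_mul _).symm
      _ ≤ 13*(p:ℝ)*dr*W := mul_le_mul_of_nonneg_right h13 (by linarith)
  set Pn : ℝ := ∏ j ∈ Finset.range (L - 1), (nf j : ℝ) with hPn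
  have hPn0 : (0:ℝ) ≤ Pn := Finset.prod_nonneg fun j _ => by positivity
  -- step (7): 2^L * Pn ≤ 13^L * (W/L)^L
  have h7 : (2:ℝ) ^ L * Pn ≤ 13 ^ L * ((W:ℝ) / L) ^ L := by
    rcases Nat.lt_or_ge L 2 with hL2 | hL2
    · have hL1 : L = 1 := by omega
      have hPn1 : Pn = 1 := by rw [hPn, hL1]; simp
      rw [hL1, hPn1]
      norm_num
      linarith
    · set k : ℕ := L - 1 with hk
      have hk1 : 1 ≤ k := by omega
      have hkL : L = k + 1 := by omega
      have hk0 : (0:ℝ) < k := by exact_mod_cast hk1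
      -- AM-GM : Pn ≤ (W/k)^k
      have hPnb : Pn ≤ ((W:ℝ) / k) ^ k := by
        have hw : ∑ _j ∈ Finset.range k, (1/(k:ℝ)) = 1 := by
          rw [Finset.sum_const, Finset.card_range, nsmul_eq_mul]
          field_simp
        have hgm1 := Real.geom_mean_le_arith_mean_weighted (Finset.range k)
          (fun _ => 1/(k:ℝ)) (fun j => (nf j : ℝ)) (fun i _ => by positivity) hw
          (fun i _ => by positivity)
        have hprodeq : (∏ j ∈ Finset.range k, ((nf j : ℝ)) ^ ((1:ℝ)/(k:ℝ))) =
            Pn ^ ((1:ℝ)/(k:ℝ)) := by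
          rw [hPn, hk]
          exact Real.finset_prod_rpow _ _ (fun i _ => by positivity) _
        have hsum : (∑ j ∈ Finset.range k, 1/(k:ℝ) * (nf j : ℝ)) ≤ (W:ℝ)/k := by
          have hs1 : (∑ j ∈ Finset.range k, 1/(k:ℝ) * (nf j : ℝ)) =
              (∑ j ∈ Finset.range k, (nf j : ℝ)) / k := by
            rw [← Finset.mul_sum]
            ring
          rw [hs1]
          have hsw : (∑ j ∈ Finset.range k, (nf j:ℝ)) ≤ (W:ℝ) := by
            rw [hk]
            exact_mod_cast hnW
          gcongr
        have hPnk : Pn ^ ((1:ℝ)/(k:ℝ)) ≤ (W:ℝ)/k := by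
          rw [← hprodeq]
          exact le_trans hgm1 hsum
        have hrr := Real.rpow_le_rpow (Real.rpow_nonneg hPn0 _) hPnk (le_of_lt hk0)
        rw [← Real.rpow_natCast ((W:ℝ)/k) k]
        rw [← Real.rpow_mul hPn0, one_div, inv_mul_cancel₀ (ne_of_gt hk0), Real.rpow_one] at hrr
        exact hrr
      -- cross-multiplied comparison
      have hcross : (2:ℝ)^L * ((W:ℝ)/k)^k ≤ 13^L * ((W:ℝ)/L)^L := by
        have hcast : (L:ℝ) = (k:ℝ) + 1 := by rw [hkL]; push_cast; ring
        rw [div_pow, div_pow, ← mul_div_assoc, ← mul_div_assoc,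
          div_le_div_iff₀ (by positivity) (by positivity), hcast, hkL]
        have hWk : (k:ℝ) + 1 ≤ (W:ℝ) := by
          rw [hkL] at hLW'
          push_cast at hLW'
          exact hLW'
        have h2k : (k:ℝ) + 1 ≤ 2 * k := by
          have : (1:ℝ) ≤ k := by exact_mod_cast hk1
          linarith
        calc (2:ℝ)^(k+1) * (W:ℝ)^k * ((k:ℝ)+1)^(k+1)
            = 2^(k+1) * (W:ℝ)^k * (((k:ℝ)+1)^k * ((k:ℝ)+1)) := by ring
          _ ≤ 2^(k+1) * (W:ℝ)^k * ((2*(k:ℝ))^k * (W:ℝ)) := by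
              apply mul_le_mul_of_nonneg_left _ (by positivity)
              exact mul_le_mul (pow_le_pow_left₀ (by positivity) h2k k) hWk
                (by positivity) (by positivity)
          _ = 2^(2*k+1) * ((W:ℝ)^k * (W:ℝ)) * (k:ℝ)^k := by
              rw [mul_pow (2:ℝ) (k:ℝ) k, show 2*k+1 = (k+1)+k from by omega, pow_add]
              ring
          _ ≤ 13^(k+1) * ((W:ℝ)^k * (W:ℝ)) * (k:ℝ)^k := by
              have h413 : (2:ℝ)^(2*k+1) ≤ 13^(k+1) := by
                calc (2:ℝ)^(2*k+1) ≤ 2^(2*(k+1)) := pow_le_pow_right₀ (by norm_num) (by omega)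
                _ = 4^(k+1) := by rw [pow_mul]; norm_num
                _ ≤ 13^(k+1) := pow_le_pow_left₀ (by norm_num) (by norm_num) _
              have hr0 : (0:ℝ) ≤ ((W:ℝ)^k * (W:ℝ)) * (k:ℝ)^k := by positivity
              calc (2:ℝ)^(2*k+1) * ((W:ℝ)^k * (W:ℝ)) * (k:ℝ)^k
                  = (2:ℝ)^(2*k+1) * (((W:ℝ)^k * (W:ℝ)) * (k:ℝ)^k) := by ring
                _ ≤ 13^(k+1) * (((W:ℝ)^k * (W:ℝ)) * (k:ℝ)^k) :=
                    mul_le_mul_of_nonneg_right h413 hr0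
                _ = 13^(k+1) * ((W:ℝ)^k * (W:ℝ)) * (k:ℝ)^k := by ring
          _ = 13^(k+1) * (W:ℝ)^(k+1) * (k:ℝ)^k := by ring
      calc (2:ℝ)^L * Pn ≤ (2:ℝ)^L * ((W:ℝ)/k)^k := by
            apply mul_le_mul_of_nonneg_left hPnb (by positivity)
        _ ≤ 13^L * ((W:ℝ)/L)^L := hcross
  -- main claim : 2^m ≤ K^L
  have hkey : (2 : ℝ) ^ m ≤ K ^ L := by
    have h1 : (2 : ℝ) ^ m ≤ ((p : ℝ) * (d : ℝ) ^ (L - 1) * (A : ℝ)) * ((d : ℝ) ^ L + 1) := by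
      exact_mod_cast hmain
    have hA' : (A : ℝ) ≤ ∏ j ∈ Finset.range (L - 1), (2 * (nf j : ℝ) * p * (d : ℝ) ^ j) := by
      exact_mod_cast hA
    have hdL1 : (1 : ℝ) ≤ (d : ℝ) ^ L := one_le_pow₀ hd1
    have h2 : ((d : ℝ) ^ L + 1) ≤ 2 * (d : ℝ) ^ L := by linarith
    have h4 : (∏ j ∈ Finset.range (L - 1), (2 * (nf j : ℝ) * p * (d : ℝ) ^ j)) =
        2 ^ (L - 1) * (p : ℝ) ^ (L - 1) * Pn *
          (d : ℝ) ^ (∑ j ∈ Finset.range (L - 1), j) := by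
      rw [Finset.prod_mul_distrib, Finset.prod_mul_distrib, Finset.prod_mul_distrib,
        Finset.prod_const, Finset.prod_const, Finset.prod_pow_eq_pow_sum, Finset.card_range,
        hPn]
      ring
    rw [h4] at hA'
    obtain ⟨Sg, hSg⟩ : ∃ s : ℕ, ∑ j ∈ Finset.range (L - 1), j = s := ⟨_, rfl⟩
    rw [hSg] at hA'
    obtain ⟨E, hE⟩ : ∃ e : ℕ, L - 1 + Sg + L = e := ⟨_, rfl⟩
    have h2E : 2 * E = L * (L + 1) := by
      rw [← hE, ← hSg]
      rcases L with _ | L'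
      · omega
      rcases L' with _ | L''
      · simp
      · have hs := Finset.sum_range_id_mul_two (L'' + 1)
        have h7' : (L'' + 1) * (L'' + 1 - 1) = L'' * L'' + L'' := by
          simp only [Nat.add_sub_cancel]
          ring
        rw [h7'] at hs
        have h6 : (L'' + 1 + 1) * (L'' + 1 + 1 + 1) = L'' * L'' + 5 * L'' + 6 := by ring
        rw [h6]
        simp only [Nat.add_sub_cancel]
        omega
    have hEe : (E : ℝ) = ((L:ℝ) + 1) / 2 * L := by
      have hc := congrArg (Nat.cast : ℕ → ℝ) h2E
      push_cast at hc
      linarith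
    have hdE : (d:ℝ) ^ E ≤ dr ^ L := by
      rw [hdr, ← Real.rpow_natCast (d:ℝ) E,
        ← Real.rpow_natCast ((d:ℝ) ^ (((L:ℝ) + 1) / 2)) L, ← Real.rpow_mul hd0]
      exact Real.rpow_le_rpow_of_exponent_le hd1 (le_of_eq hEe)
    have hL1' : L - 1 + 1 = L := by omega
    have e2 : (2:ℝ) ^ (L-1) * 2 = 2 ^ L := by rw [← pow_succ, hL1']
    have ep : (p:ℝ) * (p:ℝ) ^ (L-1) = (p:ℝ) ^ L := by rw [← pow_succ', hL1']
    have ed : (d:ℝ)^(L-1) * (d:ℝ)^Sg * (d:ℝ)^L = (d:ℝ)^E := by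
      rw [← pow_add, ← pow_add, ← hE]
    have hX0 : (0:ℝ) ≤ 2 ^ (L - 1) * (p : ℝ) ^ (L - 1) * Pn * (d : ℝ) ^ Sg := by
      have : (0:ℝ) ≤ 2 ^ (L - 1) * (p : ℝ) ^ (L - 1) := by positivity
      have h' : (0:ℝ) ≤ (d : ℝ) ^ Sg := by positivity
      nlinarith
    have hKeq : K = 13 * (p:ℝ) * dr * ((W:ℝ)/(L:ℝ)) := by rw [hK]; ring
    calc (2:ℝ) ^ m ≤ ((p : ℝ) * (d : ℝ) ^ (L - 1) * (A : ℝ)) * ((d : ℝ) ^ L + 1) := h1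
      _ ≤ ((p : ℝ) * (d : ℝ) ^ (L - 1) *
            (2 ^ (L - 1) * (p : ℝ) ^ (L - 1) * Pn * (d : ℝ) ^ Sg)) * (2 * (d : ℝ) ^ L) := by
          apply mul_le_mul _ h2 (by positivity) _
          · exact mul_le_mul_of_nonneg_left hA' (by positivity)
          · have : (0:ℝ) ≤ (p : ℝ) * (d : ℝ) ^ (L - 1) := by positivity
            nlinarith
      _ = ((2:ℝ)^(L-1) * 2) * ((p:ℝ) * (p:ℝ)^(L-1)) *
            ((d:ℝ)^(L-1) * (d:ℝ)^Sg * (d:ℝ)^L) * Pn := by ring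
      _ = (2:ℝ)^L * (p:ℝ)^L * (d:ℝ)^E * Pn := by rw [e2, ep, ed]
      _ = (p:ℝ)^L * ((d:ℝ)^E * ((2:ℝ)^L * Pn)) := by ring
      _ ≤ (p:ℝ)^L * (dr^L * (13^L * ((W:ℝ)/L)^L)) := by
          apply mul_le_mul_of_nonneg_left _ (by positivity)
          apply mul_le_mul hdE h7 _ (by positivity)
          have : (0:ℝ) ≤ (2:ℝ)^L := by positivity
          nlinarith
      _ = K ^ L := by rw [hKeq, mul_pow, mul_pow, mul_pow]; ring
  -- conclude with logarithms
  have hm : (m:ℝ) = Real.logb 2 ((2:ℝ) ^ m) := by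
    rw [Real.logb_pow, Real.logb_self_eq_one (by norm_num : (1:ℝ) < 2), mul_one]
  rw [hm]
  calc Real.logb 2 ((2:ℝ) ^ m) ≤ Real.logb 2 (K ^ L) := by
        apply (Real.logb_le_logb (by norm_num) (by positivity) (by positivity)).mpr hkey
    _ = (L:ℝ) * Real.logb 2 K := by rw [Real.logb_pow]


set_option maxHeartbeats 1000000 in
/-- **Theorem 6 (hardness of the mod-2 function).**  Suppose a network with
`W` parameters and `L` layers, a single real input and a single real output,
with continuous piecewise polynomial activation functions (at most `p ≥ 1`
pieces, degree at most `d ≥ 1`), computes `f : ℝ → ℝ` such that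
`|f(x) − (x mod 2)| < 1/2` for all integers `x ∈ {0, 1, …, 2^m − 1}`.  Then
`m ≤ L·log₂(13·p·d^{(L+1)/2}·W/L)`. -/
theorem statement4 (N : NNArch) (p d : ℕ) (hp : 1 ≤ p) (hd : 1 ≤ d)
    (hinput : N.numInputs = 1)
    (hact : ∀ v : Fin N.numNodes, N.numInputs ≤ (v : ℕ) →
      (v : ℕ) ≠ N.numNodes - 1 →
      Continuous (N.act v) ∧ PiecewisePoly (N.act v) p d)
    (w : Fin N.numNodes × Fin N.numNodes → ℝ) (b : Fin N.numNodes → ℝ)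
    (f : ℝ → ℝ) (hfdef : ∀ x : ℝ, f x = N.eval w b (fun _ => x))
    (m : ℕ)
    (hf : ∀ x : ℕ, x < 2 ^ m → |f (x : ℝ) - ((x % 2 : ℕ) : ℝ)| < 1 / 2) :
    (m : ℝ) ≤ (N.depth : ℝ) *
      Real.logb 2 (13 * (p : ℝ) * (d : ℝ) ^ (((N.depth : ℝ) + 1) / 2) *
        (N.numParams : ℝ) / (N.depth : ℝ)) := by
  classical
  obtain ⟨hc, S, hPW, hS⟩ := N.node_claim p d hp hd hact w b N.outNode
  have hfeq : f = fun x : ℝ => N.value w b (fun _ => x) N.outNode := by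
    funext x
    rw [hfdef x]
    rfl
  have hfc : Continuous f := by rw [hfeq]; exact hc
  have hfPW : PW f S (d ^ N.layer N.outNode) := by rw [hfeq]; exact hPW
  have hout_ge : N.numInputs ≤ (N.outNode : ℕ) := by
    have := N.hIn
    show N.numInputs ≤ N.numNodes - 1
    omega
  -- parity hypothesis in the form needed by `counting`
  have hpar : ∀ i : ℕ, i < 2 ^ m →
      (i % 2 = 0 → f i < 1 / 2) ∧ (i % 2 = 1 → 1 / 2 < f i) := by
    intro i hi
    constructor
    · intro hev
      have h1 := hf i hi
      rw [hev] at h1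
      simp only [Nat.cast_zero, sub_zero] at h1
      exact (abs_lt.mp h1).2
    · intro hod
      have h1 := hf i hi
      rw [hod] at h1
      simp only [Nat.cast_one] at h1
      have := (abs_lt.mp h1).1
      linarith
  have hcnt : 2 ^ m ≤ (S.card + 1) * (d ^ N.layer N.outNode + 1) :=
    counting hfc (Nat.one_le_pow _ _ hd) hfPW (2 ^ m) hpar
  by_cases hL0 : N.depth = 0
  · -- constant network
    have hm0 : m = 0 := by
      by_contra hm
      have h2m : 1 < 2 ^ m := by
        have : 1 ≤ m := by omega
        calc 1 < 2 ^ 1 := by norm_num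
        _ ≤ 2 ^ m := Nat.pow_le_pow_right (by norm_num) this
      have hconst : ∀ x : ℝ, N.value w b (fun _ => x) N.outNode = b N.outNode := by
        intro x
        rw [N.value_unfold w b _ N.outNode hout_ge,
          if_pos (show (N.outNode : ℕ) = N.numNodes - 1 from rfl)]
        have hinc : N.incoming N.outNode = ∅ := N.incoming_empty_of_layer_zero hL0
        rw [Finset.sum_attach (N.incoming N.outNode)
          (fun e => w e * N.value w b (fun _ => x) e.1), hinc, Finset.sum_empty, zero_add]
      have h0 := hf 0 (by omega)
      have h1 := hf 1 h2m
      rw [hfeq] at h0 h1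
      simp only [Nat.cast_zero, Nat.cast_one] at h0 h1
      rw [hconst] at h0 h1
      norm_num at h0 h1
      rcases abs_lt.mp h0 with ⟨ha, hb⟩
      rcases abs_lt.mp h1 with ⟨hc', hd'⟩
      linarith
    rw [hm0, hL0]
    norm_num
  · -- at least one layer
    have hL1 : 1 ≤ N.depth := by omega
    have hLW : N.depth ≤ N.numParams := by
      have h1 := N.depth_le_numUnits hL1
      have h2 : N.numUnits ≤ N.numParams := Nat.le_add_left _ _
      omega
    have hnW : ∑ j ∈ Finset.range (N.depth - 1), (N.layerUnits (j + 1)).card ≤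
        N.numParams := by
      have h1 := N.layerUnits_le_numUnits (N.depth - 1)
      have h2 : N.numUnits ≤ N.numParams := Nat.le_add_left _ _
      omega
    have hmain : 2 ^ m ≤ (p * d ^ (N.depth - 1) * (1 + N.Abnd p d (N.depth - 1))) *
        (d ^ N.depth + 1) := by
      have hpb : S.card + 1 ≤ p * d ^ (N.depth - 1) * (1 + N.Abnd p d (N.depth - 1)) := by
        have := hS
        rw [NNArch.pb, if_neg (show ¬ N.layer N.outNode = 0 from hL0)] at this
        exact this
      calc 2 ^ m ≤ (S.card + 1) * (d ^ N.layer N.outNode + 1) := hcnt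
        _ ≤ (p * d ^ (N.depth - 1) * (1 + N.Abnd p d (N.depth - 1))) *
            (d ^ N.depth + 1) := Nat.mul_le_mul hpb (le_refl _)
    have hA : 1 + N.Abnd p d (N.depth - 1) ≤
        ∏ j ∈ Finset.range (N.depth - 1), (2 * (N.layerUnits (j + 1)).card * p * d ^ j) :=
      N.abnd_le_prod hp hd (N.depth - 1)
        (fun j hj1 hj2 => N.layers_nonempty j hj1 (by omega))
    exact final_arith p d N.numParams N.depth m (1 + N.Abnd p d (N.depth - 1)) hp hd hL1 hLW
      (fun j => (N.layerUnits (j + 1)).card) hnW hmain hA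

end
end

section
/- Let f : ℝ → ℝ be continuous and piecewise polynomial with at most P pieces, each of degree at most D. If m is a positive integer and |f(x) − (x mod 2)| < 1/2 for every integer x ∈ {0, 1, …, 2^m − 1}, then 2^m − 1 ≤ P·(D + 1). -/
lemma pieceIndex_mono {B : ℕ} (t : Fin B → ℝ) {x y : ℝ} (h : x ≤ y) :
    pieceIndex t x ≤ pieceIndex t y := by
  simp only [pieceIndex, Fin.mk_le_mk]
  apply Finset.card_le_card
  intro i hi
  simp only [Finset.mem_filter] at *
  exact ⟨hi.1, hi.2.trans h⟩

lemma pieceIndex_squeeze {B : ℕ} (t : Fin B → ℝ) {x y z : ℝ} (hxy : x ≤ y) (hyz : y ≤ z)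
    (h : pieceIndex t x = pieceIndex t z) : pieceIndex t y = pieceIndex t x :=
  le_antisymm (h ▸ pieceIndex_mono t hyz) (pieceIndex_mono t hxy)

/-- **Oscillation bound for piecewise polynomials.**  If `f : ℝ → ℝ` is
continuous and piecewise polynomial with at most `P` pieces, each of degree at
most `D`, and `|f(x) − (x mod 2)| < 1/2` for every integer
`x ∈ {0, 1, …, 2^m − 1}` (with `m` a positive integer), then
`2^m − 1 ≤ P·(D + 1)`. -/
theorem statement5 (f : ℝ → ℝ) (P D : ℕ) (hcont : Continuous f)
    (hpp : PiecewisePoly f P D) (m : ℕ) (hm : 0 < m)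
    (hf : ∀ x : ℕ, x < 2 ^ m → |f (x : ℝ) - ((x % 2 : ℕ) : ℝ)| < 1 / 2) :
    2 ^ m - 1 ≤ P * (D + 1) := by
  classical
  obtain ⟨B, t, q, hBP, -, hdeg, hq⟩ := hpp
  set N := 2 ^ m with hNdef
  have hN2 : 2 ≤ N := by
    calc 2 = 2 ^ 1 := by norm_num
    _ ≤ 2 ^ m := Nat.pow_le_pow_right (by norm_num) hm
  -- sign facts at the integers
  have hlt : ∀ k : ℕ, k < N → k % 2 = 0 → f k < 1 / 2 := by
    intro k hk h2
    have h := hf k hk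
    rw [h2] at h
    have := (abs_lt.mp h).2
    norm_num at this ⊢
    linarith
  have hgt : ∀ k : ℕ, k < N → k % 2 = 1 → 1 / 2 < f k := by
    intro k hk h2
    have h := hf k hk
    rw [h2] at h
    have := (abs_lt.mp h).1
    norm_num at this ⊢
    linarith
  have hne : ∀ k : ℕ, k < N → f k ≠ 1 / 2 := by
    intro k hk
    rcases Nat.mod_two_eq_zero_or_one k with h2 | h2
    · exact ne_of_lt (hlt k hk h2)
    · exact ne_of_gt (hgt k hk h2)
  -- crossing points
  have hcross : ∀ k : ℕ, ∃ ρ : ℝ, k + 1 < N →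
      ρ ∈ Set.Ioo (k : ℝ) ((k : ℝ) + 1) ∧ f ρ = 1 / 2 := by
    intro k
    by_cases hk : k + 1 < N
    · have hk' : k < N := by omega
      have hcast : ((k + 1 : ℕ) : ℝ) = (k : ℝ) + 1 := by push_cast; ring
      have hle : (k : ℝ) ≤ (k : ℝ) + 1 := by linarith
      rcases Nat.mod_two_eq_zero_or_one k with h2 | h2
      · have h1 : f k < 1 / 2 := hlt k hk' h2
        have h2' : (k + 1) % 2 = 1 := by omega
        have h3 : 1 / 2 < f ((k : ℝ) + 1) := by
          have := hgt (k + 1) hk h2'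
          rwa [hcast] at this
        have := intermediate_value_Ioo hle hcont.continuousOn
        obtain ⟨ρ, hρ1, hρ2⟩ := this (Set.mem_Ioo.mpr ⟨h1, h3⟩)
        exact ⟨ρ, fun _ => ⟨hρ1, hρ2⟩⟩
      · have h1 : 1 / 2 < f k := hgt k hk' h2
        have h2' : (k + 1) % 2 = 0 := by omega
        have h3 : f ((k : ℝ) + 1) < 1 / 2 := by
          have := hlt (k + 1) hk h2'
          rwa [hcast] at this
        have := intermediate_value_Ioo' hle hcont.continuousOn
        obtain ⟨ρ, hρ1, hρ2⟩ := this (Set.mem_Ioo.mpr ⟨h3, h1⟩)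
        exact ⟨ρ, fun _ => ⟨hρ1, hρ2⟩⟩
    · exact ⟨0, fun h => absurd h hk⟩
  choose ρ hρ using hcross
  -- counting set-up
  set pc : ℕ → Fin (B + 1) := fun k => pieceIndex t (k : ℝ) with hpc
  set G := Finset.range (N - 1) with hG
  set Sp := G.filter (fun k => pc k = pc (k + 1)) with hSp
  set T := G.filter (fun k => ¬ pc k = pc (k + 1)) with hT
  have hsplit : Sp.card + T.card = G.card :=
    Finset.card_filter_add_card_filter_not _
  have hcast1 : ∀ k : ℕ, ((k + 1 : ℕ) : ℝ) = (k : ℝ) + 1 := by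
    intro k; push_cast; ring
  -- bound on transitions
  have hTle : T.card ≤ B := by
    have hmem : ∀ k ∈ T, ((pc (k + 1) : ℕ) - 1) ∈ Finset.range B := by
      intro k hk
      simp only [hT, Finset.mem_filter] at hk
      have h1 : pc k ≤ pc (k + 1) := by
        have : (k : ℝ) ≤ ((k + 1 : ℕ) : ℝ) := by rw [hcast1]; linarith
        exact pieceIndex_mono t this
      have h2 : pc k < pc (k + 1) := lt_of_le_of_ne h1 hk.2
      have h3 : (pc (k + 1) : ℕ) ≤ B := by omega
      have h4 : (pc k : ℕ) < (pc (k + 1) : ℕ) := h2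
      simp only [Finset.mem_range]
      omega
    refine le_trans (Finset.card_le_card_of_injOn (fun k => (pc (k + 1) : ℕ) - 1) hmem ?_)
      (by simp)
    intro k hk k' hk' heq
    simp only [hT, Finset.mem_filter, Finset.coe_filter, Set.mem_setOf_eq] at hk hk'
    by_contra hne'
    have key : ∀ a b : ℕ, a ∈ T → b ∈ T → a < b →
        (pc (a + 1) : ℕ) < (pc (b + 1) : ℕ) := by
      intro a b ha hb hab
      simp only [hT, Finset.mem_filter] at ha hb
      have h1 : pc b ≤ pc (b + 1) := pieceIndex_mono t (by rw [hcast1]; linarith)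
      have h2 : pc b < pc (b + 1) := lt_of_le_of_ne h1 hb.2
      have h3 : pc (a + 1) ≤ pc b := by
        apply pieceIndex_mono t
        have : (a + 1 : ℕ) ≤ b := hab
        exact_mod_cast this
      have := lt_of_le_of_lt h3 h2
      exact this
    have heq2 : (pc (k + 1) : ℕ) - 1 = (pc (k' + 1) : ℕ) - 1 := heq
    have hkT : k ∈ T := by simp [hT, Finset.mem_filter]; tauto
    have hk'T : k' ∈ T := by simp [hT, Finset.mem_filter]; tauto
    rcases lt_trichotomy k k' with h | h | h
    · have := key k k' hkT hk'T h
      have h1 : pc k ≤ pc (k + 1) := pieceIndex_mono t (by rw [hcast1]; linarith)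
      have h2 : pc k < pc (k + 1) := lt_of_le_of_ne h1 (by tauto)
      omega
    · exact hne' h
    · have := key k' k hk'T hkT h
      have h1 : pc k' ≤ pc (k' + 1) := pieceIndex_mono t (by rw [hcast1]; linarith)
      have h2 : pc k' < pc (k' + 1) := lt_of_le_of_ne h1 (by tauto)
      omega
  -- bound on same-piece gaps
  have hSple : Sp.card ≤ (B + 1) * D := by
    rw [Finset.card_eq_sum_card_fiberwise
      (f := pc) (t := Finset.univ) (fun k _ => Finset.mem_univ _)]
    have hfib : ∀ i : Fin (B + 1), (Sp.filter fun k => pc k = i).card ≤ D := by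
      intro i
      rcases Finset.eq_empty_or_nonempty (Sp.filter fun k => pc k = i) with he | ⟨k0, hk0⟩
      · simp [he]
      · -- the polynomial q i - 1/2 is nonzero
        set r : Polynomial ℝ := q i - Polynomial.C (1 / 2) with hr
        have hk0' := hk0
        simp only [hSp, Finset.mem_filter, Finset.mem_range, hG] at hk0'
        have hk0N : k0 < N := by omega
        have hrne : r ≠ 0 := by
          intro h0
          have : r.eval (k0 : ℝ) = 0 := by rw [h0]; simp
          rw [hr] at this
          simp only [Polynomial.eval_sub, Polynomial.eval_C] at this
          have hfk0 : f (k0 : ℝ) = (q (pc k0)).eval (k0 : ℝ) := hq _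
          rw [hk0'.2] at hfk0
          exact hne k0 hk0N (by linarith [hfk0])
        have hdegr : r.natDegree ≤ D := by
          calc r.natDegree ≤ max (q i).natDegree (Polynomial.C (1/2 : ℝ)).natDegree :=
            Polynomial.natDegree_sub_le _ _
          _ ≤ D := by simp [Polynomial.natDegree_C]; exact hdeg i
        have hroots : r.roots.toFinset.card ≤ D := by
          calc r.roots.toFinset.card ≤ Multiset.card r.roots := r.roots.toFinset_card_le
          _ ≤ r.natDegree := Polynomial.card_roots' r
          _ ≤ D := hdegr
        refine le_trans (Finset.card_le_card_of_injOn (fun k => ρ k) ?_ ?_) hroots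
        · intro k hk
          simp only [hSp, Finset.mem_coe, Finset.mem_filter, Finset.mem_range, hG] at hk
          have hkN : k + 1 < N := by omega
          obtain ⟨hmem, hval⟩ := hρ k hkN
          have hpcρ : pieceIndex t (ρ k) = pc k := by
            apply pieceIndex_squeeze t (le_of_lt hmem.1) (le_of_lt hmem.2)
            rw [← hcast1 k] at *
            exact hk.1.2
          have : f (ρ k) = (q i).eval (ρ k) := by
            rw [hq (ρ k)]
            rw [hpcρ, hk.2]
          have heval : r.eval (ρ k) = 0 := by
            rw [hr]
            simp only [Polynomial.eval_sub, Polynomial.eval_C]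
            rw [← this, hval]
            ring
          rw [Finset.mem_coe, Multiset.mem_toFinset, Polynomial.mem_roots hrne]
          exact heval
        · intro k hk k' hk' heq
          simp only [hSp, Finset.coe_filter, Finset.mem_filter, Finset.mem_range, hG,
            Set.mem_setOf_eq] at hk hk'
          have hkN : k + 1 < N := by omega
          have hk'N : k' + 1 < N := by omega
          obtain ⟨hm1, -⟩ := hρ k hkN
          obtain ⟨hm2, -⟩ := hρ k' hk'N
          by_contra hne'
          have heq' : ρ k = ρ k' := heq
          rcases lt_trichotomy k k' with h | h | h
          · have h1 : (k : ℝ) + 1 ≤ (k' : ℝ) := by exact_mod_cast Nat.succ_le_of_lt h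
            have h2 := hm1.2
            have h3 := hm2.1
            linarith
          · exact hne' h
          · have h1 : (k' : ℝ) + 1 ≤ (k : ℝ) := by exact_mod_cast Nat.succ_le_of_lt h
            have h2 := hm2.2
            have h3 := hm1.1
            linarith
    calc (∑ i : Fin (B + 1), (Sp.filter fun k => pc k = i).card)
        ≤ ∑ _i : Fin (B + 1), D := Finset.sum_le_sum (fun i _ => hfib i)
    _ = (B + 1) * D := by simp [Finset.sum_const, Finset.card_univ, mul_comm]
  -- conclude
  have hGcard : G.card = N - 1 := Finset.card_range _
  have h1 : (B + 1) * D ≤ P * D := Nat.mul_le_mul_right D hBP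
  have h2 : P * (D + 1) = P * D + P := by ring
  omega
end

section
/- Let m, t, w, r be real numbers with r ≥ 16, m ≥ w ≥ t ≥ 0 and w > 0. If 2^m ≤ 2^t·(m·r/w)^w, then m ≤ t + w·log₂(2·r·log₂ r). -/
open Real

/-- Tangent-line bound for `log₂` at `x = 8`. -/
lemma log2_tangent8 {x : ℝ} (hx : 0 < x) :
    Real.logb 2 x ≤ 3 + (x - 8) / (8 * Real.log 2) := by
  have h2 : (0 : ℝ) < Real.log 2 := Real.log_pos (by norm_num)
  have h := Real.log_le_sub_one_of_pos (show (0:ℝ) < x / 8 by positivity)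
  have hdiv : Real.log (x / 8) = Real.log x - Real.log 8 :=
    Real.log_div (ne_of_gt hx) (by norm_num)
  have h8 : Real.log 8 = 3 * Real.log 2 := by
    rw [show (8:ℝ) = 2 ^ (3:ℕ) by norm_num, Real.log_pow]; push_cast; ring
  have hlog : Real.log x ≤ 3 * Real.log 2 + (x / 8 - 1) := by
    rw [hdiv, h8] at h; linarith
  rw [Real.logb, div_le_iff₀ h2]
  have : (3 + (x - 8) / (8 * Real.log 2)) * Real.log 2
      = 3 * Real.log 2 + (x - 8) / 8 := by
    field_simp
  rw [this]; linarith

/-- **Lemma 9 (arithmetic lemma).**  Let `m, t, w, r` be real numbers with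
`r ≥ 16`, `m ≥ w ≥ t ≥ 0` and `w > 0`.  If `2^m ≤ 2^t·(m·r/w)^w`, then
`m ≤ t + w·log₂(2·r·log₂ r)`. -/
theorem statement13 (m t w r : ℝ) (hr : 16 ≤ r) (hwm : w ≤ m) (htw : t ≤ w)
    (ht : 0 ≤ t) (hw : 0 < w)
    (h : (2 : ℝ) ^ m ≤ (2 : ℝ) ^ t * (m * r / w) ^ w) :
    m ≤ t + w * Real.logb 2 (2 * r * Real.logb 2 r) := by
  have hb1 : (1:ℝ) < 2 := by norm_num
  have hb0 : (0:ℝ) < 2 := by norm_num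
  have hbne : (2:ℝ) ≠ 1 := by norm_num
  have hm : 0 < m := lt_of_lt_of_le hw hwm
  have hr0 : (0:ℝ) < r := by linarith
  have hy : (0:ℝ) < m * r / w := by positivity
  set L := Real.logb 2 r with hLdef
  have hL4 : (4:ℝ) ≤ L := by
    have h16 : Real.logb 2 (16:ℝ) = 4 := by
      rw [show (16:ℝ) = (2:ℝ) ^ (4:ℝ) by
        rw [show (4:ℝ) = ((4:ℕ):ℝ) by norm_num, Real.rpow_natCast]; norm_num]
      exact Real.logb_rpow hb0 hbne
    calc (4:ℝ) = Real.logb 2 16 := h16.symm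
      _ ≤ L := Real.logb_le_logb_of_le hb1 (by norm_num) hr
  -- Step 1 : take log₂ of the hypothesis
  have step1 : m ≤ t + w * Real.logb 2 (m * r / w) := by
    have hlhs : (0:ℝ) < (2:ℝ) ^ m := Real.rpow_pos_of_pos hb0 m
    have h1 : Real.logb 2 ((2:ℝ) ^ m) ≤
        Real.logb 2 ((2:ℝ) ^ t * (m * r / w) ^ w) :=
      Real.logb_le_logb_of_le hb1 hlhs h
    rw [Real.logb_rpow hb0 hbne] at h1
    rw [Real.logb_mul (ne_of_gt (Real.rpow_pos_of_pos hb0 t))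
      (ne_of_gt (Real.rpow_pos_of_pos hy w)),
      Real.logb_rpow hb0 hbne,
      Real.logb_rpow_eq_mul_logb_of_pos hy] at h1
    linarith
  have hsplit : Real.logb 2 (m * r / w) = Real.logb 2 (m / w) + L := by
    rw [show m * r / w = (m / w) * r by ring,
      Real.logb_mul (by positivity) (ne_of_gt hr0)]
  by_cases hx : m / w ≤ 2 * L
  · -- easy case : m/w ≤ 2 log₂ r
    have hmono : Real.logb 2 (m * r / w) ≤ Real.logb 2 (2 * r * L) := by
      apply Real.logb_le_logb_of_le hb1 hy
      have : m * r / w = (m / w) * r := by ring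
      rw [this]
      nlinarith
    nlinarith [step1, hmono]
  · -- hard case : m/w > 2 log₂ r ; derive a contradiction
    exfalso
    push_neg at hx
    set x := m / w with hxdef
    have hx1 : (1:ℝ) ≤ x := (one_le_div hw).mpr hwm
    have hx0 : (0:ℝ) < x := by linarith
    have hx8 : (8:ℝ) < x := by linarith
    -- from step1 : x ≤ 1 + log₂ x + L
    have hA : x ≤ 1 + Real.logb 2 x + L := by
      rw [hsplit] at step1
      have : m ≤ w * (1 + Real.logb 2 x + L) := by nlinarith [step1]
      calc x = m / w := rfl
        _ ≤ 1 + Real.logb 2 x + L := (div_le_iff₀ hw).mpr (by linarith [this])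
    have hB := log2_tangent8 hx0
    have hc : (0:ℝ) < Real.log 2 := Real.log_pos (by norm_num)
    have hc9 : (0.6931471803 : ℝ) < Real.log 2 := Real.log_two_gt_d9
    have hE : x - 4 - L ≤ (x - 8) / (8 * Real.log 2) := by linarith
    have hE' : (x - 4 - L) * (8 * Real.log 2) ≤ x - 8 :=
      (le_div_iff₀ (by positivity)).mp hE
    nlinarith [hE', hx, hx8, hc9, mul_pos (sub_pos.mpr hx8) hc]
end

section
/- Let G be a finite directed acyclic graph whose nodes are partitioned into layers 0, 1, …, L such that every edge goes from a node in some layer to a node in a strictly higher layer, with a unique node s in layer 0 and a designated node o in layer L. For i ∈ {1, …, L}, let W_i ≥ 1 denote the number of edges whose head lies in layer i, and let W = Σ_{i=1}^L W_i. Then the number of directed paths from s to o is at most Π_{i=1}^L (1 + W_i), which is at most ((L + W)/L)^L; in particular, if W ≥ L, the number of such paths is at most (2W/L)^L. -/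
namespace Stmt16

lemma mem_zip_tail_of_chain' {α : Type*} {r : α → α → Prop} :
    ∀ (l : List α), l.Chain' r → ∀ e ∈ l.zip l.tail, r e.1 e.2
  | [], _, e, he => by simp at he
  | [a], _, e, he => by simp at he
  | a :: b :: t, h, e, he => by
      rw [show List.Chain' r (a :: b :: t) = List.IsChain r (a :: b :: t) from rfl,
        List.isChain_cons_cons] at h
      simp only [List.tail_cons, List.zip_cons_cons, List.mem_cons] at he
      rcases he with rfl | he
      · exact h.1
      · exact mem_zip_tail_of_chain' (b :: t) h.2 e (by simpa using he)

lemma map_snd_zip_tail {α : Type*} (l : List α) :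
    (l.zip l.tail).map Prod.snd = l.tail :=
  List.map_snd_zip (by cases l <;> simp)

lemma pmap_mk_inj {α : Type*} {p : α → Prop} {o1 o2 : Option α} {h1 : ∀ a ∈ o1, p a}
    {h2 : ∀ a ∈ o2, p a}
    (h : o1.pmap (fun a h => (⟨a, h⟩ : Subtype p)) h1
       = o2.pmap (fun a h => (⟨a, h⟩ : Subtype p)) h2) : o1 = o2 := by
  cases o1 <;> cases o2 <;> simp_all [Option.pmap]

lemma path_eq {V : ℕ} (edges : Finset (Fin V × Fin V)) (layerOf : Fin V → ℕ)
    (hedge : ∀ e ∈ edges, layerOf e.1 < layerOf e.2)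
    (s : Fin V)
    (l1 l2 : List (Fin V))
    (hc1 : l1.Chain' (fun u v => (u, v) ∈ edges)) (hh1 : l1.head? = some s)
    (hc2 : l2.Chain' (fun u v => (u, v) ∈ edges)) (hh2 : l2.head? = some s)
    (hfind : ∀ i : ℕ, (l1.zip l1.tail).find? (fun e => decide (layerOf e.2 = i))
      = (l2.zip l2.tail).find? (fun e => decide (layerOf e.2 = i))) :
    l1 = l2 := by
  set r : Fin V → Fin V → Prop := fun u v => layerOf u < layerOf v with hr
  haveI : IsTrans (Fin V) r := ⟨fun a b c h h' => h.trans h'⟩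
  haveI : IsAntisymm (Fin V) r := ⟨fun a b h h' => absurd (h.trans h') (lt_irrefl _)⟩
  have hlc : ∀ l : List (Fin V), l.Chain' (fun u v => (u, v) ∈ edges) → l.Chain' r :=
    fun l hc => hc.imp (fun {a b} h => hedge (a, b) h)
  have hpw1 : l1.Pairwise r := List.isChain_iff_pairwise.mp (hlc l1 hc1)
  have hpw2 : l2.Pairwise r := List.isChain_iff_pairwise.mp (hlc l2 hc2)
  have hnodmap : ∀ l : List (Fin V), l.Pairwise r →
      ((l.zip l.tail).map (fun e => layerOf e.2)).Nodup := by
    intro l hpw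
    have h1 : (l.zip l.tail).map (fun e : Fin V × Fin V => layerOf e.2)
        = (l.tail).map layerOf := by
      rw [show (fun e : Fin V × Fin V => layerOf e.2) = layerOf ∘ Prod.snd from rfl,
        ← List.map_map, map_snd_zip_tail]
    rw [h1]
    have : l.tail.Pairwise r := hpw.tail
    have : (l.tail.map layerOf).Pairwise (· < ·) := List.pairwise_map.mpr this
    exact this.imp (fun h => Nat.ne_of_lt h)
  have hfindmem : ∀ l : List (Fin V), l.Pairwise r → ∀ e ∈ l.zip l.tail,
      (l.zip l.tail).find? (fun e' => decide (layerOf e'.2 = layerOf e.2)) = some e := by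
    intro l hpw e he
    cases hf : (l.zip l.tail).find? (fun e' => decide (layerOf e'.2 = layerOf e.2)) with
    | none =>
        rw [List.find?_eq_none] at hf
        exact absurd (by simp) (hf e he)
    | some e' =>
        have hp : layerOf e'.2 = layerOf e.2 := by
          have := List.find?_some hf
          simpa using this
        have hm := List.mem_of_find?_eq_some hf
        have := List.inj_on_of_nodup_map (hnodmap l hpw) hm he hp
        rw [this]
  have hmemE : ∀ e : Fin V × Fin V, e ∈ l1.zip l1.tail ↔ e ∈ l2.zip l2.tail := by
    intro e
    constructor
    · intro he
      have := (hfindmem l1 hpw1 e he).symm.trans (hfind (layerOf e.2))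
      exact List.mem_of_find?_eq_some this.symm
    · intro he
      have := (hfindmem l2 hpw2 e he).symm.trans (hfind (layerOf e.2)).symm
      exact List.mem_of_find?_eq_some this.symm
  have htail : l1.tail.toFinset = l2.tail.toFinset := by
    ext v
    simp only [List.mem_toFinset]
    rw [← map_snd_zip_tail l1, ← map_snd_zip_tail l2]
    simp only [List.mem_map]
    constructor
    · rintro ⟨e, he, rfl⟩; exact ⟨e, (hmemE e).mp he, rfl⟩
    · rintro ⟨e, he, rfl⟩; exact ⟨e, (hmemE e).mpr he, rfl⟩
  have hl1 : s :: l1.tail = l1 := List.cons_head?_tail (Option.mem_def.mpr hh1)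
  have hl2 : s :: l2.tail = l2 := List.cons_head?_tail (Option.mem_def.mpr hh2)
  have hfs : l1.toFinset = l2.toFinset := by
    rw [← hl1, ← hl2, List.toFinset_cons, List.toFinset_cons, htail]
  have hnd1 : l1.Nodup := hpw1.imp (fun h => by rintro rfl; exact lt_irrefl _ h)
  have hnd2 : l2.Nodup := hpw2.imp (fun h => by rintro rfl; exact lt_irrefl _ h)
  exact List.Perm.eq_of_pairwise (fun a b _ _ h h' => absurd (h.trans h') (lt_irrefl _)) hpw1 hpw2 (List.perm_of_nodup_nodup_toFinset_eq hnd1 hnd2 hfs)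

end Stmt16

/-- **Path counting in a layered DAG (inequality (2)).**  Let `G` be a finite
DAG on nodes `Fin V`, with a layer assignment `layerOf : Fin V → ℕ` taking
values in `{0, …, L}` such that every edge goes to a strictly higher layer,
a unique node `s` in layer `0`, and a designated node `o` in layer `L`.  For
`i ∈ {1, …, L}` let `Wᵢ ≥ 1` be the number of edges whose head lies in layer
`i`, and `W = ∑ᵢ Wᵢ`.  A directed path from `s` to `o` is a list of nodes
starting at `s`, ending at `o`, in which consecutive nodes are joined by
edges.  Then the number of directed paths from `s` to `o` is at most
`∏_{i=1}^L (1 + Wᵢ)`, which is at most `((L + W)/L)^L`; in particular, if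
`W ≥ L`, the number of paths is at most `(2W/L)^L`. -/
theorem statement16 (V L : ℕ) (hV : 0 < V)
    (edges : Finset (Fin V × Fin V))
    (layerOf : Fin V → ℕ) (hlay : ∀ v, layerOf v ≤ L)
    (hedge : ∀ e ∈ edges, layerOf e.1 < layerOf e.2)
    (s o : Fin V) (hs : ∀ v, layerOf v = 0 ↔ v = s) (ho : layerOf o = L)
    (Wi : ℕ → ℕ)
    (hWi : ∀ i, Wi i = (edges.filter fun e => layerOf e.2 = i).card)
    (hWpos : ∀ i ∈ Finset.Icc 1 L, 1 ≤ Wi i)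
    (W : ℕ) (hW : W = ∑ i ∈ Finset.Icc 1 L, Wi i)
    (paths : Set (List (Fin V)))
    (hpaths : paths = {l : List (Fin V) |
      l.Chain' (fun u v => (u, v) ∈ edges) ∧
      l.head? = some s ∧ l.getLast? = some o}) :
    Set.ncard paths ≤ ∏ i ∈ Finset.Icc 1 L, (1 + Wi i) ∧
    ((∏ i ∈ Finset.Icc 1 L, (1 + Wi i) : ℕ) : ℝ) ≤ (((L : ℝ) + W) / L) ^ L ∧
    (L ≤ W → (Set.ncard paths : ℝ) ≤ (2 * (W : ℝ) / L) ^ L) := by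
  classical
  have hedge_mem : ∀ (l : List (Fin V)), l.Chain' (fun u v => (u, v) ∈ edges) →
      ∀ e ∈ l.zip l.tail, e ∈ edges := by
    intro l hc e he
    have := Stmt16.mem_zip_tail_of_chain' l hc e he
    simpa using this
  -- Part 1
  have key1 : Set.ncard paths ≤ ∏ i ∈ Finset.Icc 1 L, (1 + Wi i) := by
    rw [← Nat.card_coe_set_eq]
    have hmemp : ∀ l ∈ paths, l.Chain' (fun u v => (u, v) ∈ edges) ∧
        l.head? = some s ∧ l.getLast? = some o := by
      intro l hl; rw [hpaths] at hl; exact hl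
    have hproof : ∀ (lp : ↥paths) (i : Fin L) (a : Fin V × Fin V),
        a ∈ (lp.1.zip lp.1.tail).find? (fun e => decide (layerOf e.2 = (i : ℕ) + 1)) →
        a ∈ edges.filter fun e' => layerOf e'.2 = (i : ℕ) + 1 := by
      intro lp i a ha
      have ha' := Option.mem_def.mp ha
      have hmem := List.mem_of_find?_eq_some ha'
      have hp : layerOf a.2 = (i : ℕ) + 1 := by simpa using List.find?_some ha'
      exact Finset.mem_filter.mpr ⟨hedge_mem _ (hmemp lp.1 lp.2).1 a hmem, hp⟩
    have hle : Nat.card ↥paths ≤ Nat.card ((i : Fin L) → Option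
        {e : Fin V × Fin V // e ∈ edges.filter fun e' => layerOf e'.2 = (i : ℕ) + 1}) := by
      apply Nat.card_le_card_of_injective
        (fun lp i => Option.pmap (fun a h => ⟨a, h⟩)
          ((lp.1.zip lp.1.tail).find? (fun e => decide (layerOf e.2 = (i : ℕ) + 1)))
          (hproof lp i))
      intro l1 l2 h
      obtain ⟨hc1, hh1, -⟩ := hmemp l1.1 l1.2
      obtain ⟨hc2, hh2, -⟩ := hmemp l2.1 l2.2
      apply Subtype.ext
      apply Stmt16.path_eq edges layerOf hedge s l1.1 l2.1 hc1 hh1 hc2 hh2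
      intro i
      by_cases hi : 1 ≤ i ∧ i ≤ L
      · have h' := congrFun h ⟨i - 1, by omega⟩
        have h'' := Stmt16.pmap_mk_inj h'
        rw [show i - 1 + 1 = i from by omega] at h''
        exact h''
      · have hn : ∀ l : List (Fin V), l.Chain' (fun u v => (u, v) ∈ edges) →
            (l.zip l.tail).find? (fun e => decide (layerOf e.2 = i)) = none := by
          intro l hc
          rw [List.find?_eq_none]
          intro e he
          simp only [decide_eq_true_eq]
          intro hEq
          have h1 : layerOf e.1 < layerOf e.2 := hedge _ (hedge_mem l hc e he)
          have h2 := hlay e.2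
          omega
        rw [hn l1.1 hc1, hn l2.1 hc2]
    refine hle.trans (le_of_eq ?_)
    have hfac : ∀ i : Fin L, Nat.card (Option
        {e : Fin V × Fin V // e ∈ edges.filter fun e' => layerOf e'.2 = (i : ℕ) + 1})
        = 1 + Wi ((i : ℕ) + 1) := by
      intro i
      rw [Finite.card_option]
      have h1 : Nat.card
          {e : Fin V × Fin V // e ∈ edges.filter fun e' => layerOf e'.2 = (i : ℕ) + 1}
          = (edges.filter fun e' => layerOf e'.2 = (i : ℕ) + 1).card :=
        Nat.card_eq_finsetCard _
      rw [h1, hWi]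
      omega
    rw [Nat.card_pi]
    rw [Finset.prod_congr rfl (fun i _ => hfac i),
      Fin.prod_univ_eq_prod_range (fun i => 1 + Wi (i + 1)) L,
      show Finset.Icc 1 L = Finset.Ico 1 (L + 1) from (Finset.Ico_add_one_right_eq_Icc 1 L).symm,
      Finset.prod_Ico_eq_prod_range]
    simp [Nat.add_comm]
  -- Part 2
  have key2 : ((∏ i ∈ Finset.Icc 1 L, (1 + Wi i) : ℕ) : ℝ) ≤ (((L : ℝ) + W) / L) ^ L := by
    rcases Nat.eq_zero_or_pos L with hL0 | hL
    · subst hL0; simp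
    · have hLpos : (0 : ℝ) < L := by exact_mod_cast hL
      have hcard : (Finset.Icc 1 L).card = L := by simp
      have hsum1 : ∑ _i ∈ Finset.Icc 1 L, (1 : ℝ) = L := by simp [hcard]
      have hz : ∀ i ∈ Finset.Icc 1 L, (0 : ℝ) ≤ 1 + (Wi i : ℝ) := fun i _ => by positivity
      have hgm := Real.geom_mean_le_arith_mean (Finset.Icc 1 L) (fun _ => (1 : ℝ))
        (fun i => 1 + (Wi i : ℝ)) (fun i _ => zero_le_one) (by rw [hsum1]; exact hLpos) hz
      rw [hsum1] at hgm
      simp only [Real.rpow_one, one_mul] at hgm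
      have hP0 : (0 : ℝ) ≤ ∏ i ∈ Finset.Icc 1 L, (1 + (Wi i : ℝ)) := Finset.prod_nonneg hz
      have hsum : ∑ i ∈ Finset.Icc 1 L, (1 + (Wi i : ℝ)) = (L : ℝ) + W := by
        rw [Finset.sum_add_distrib, hsum1, hW]
        push_cast
        ring
      rw [hsum] at hgm
      have hback : ((∏ i ∈ Finset.Icc 1 L, (1 + (Wi i : ℝ))) ^ ((L : ℝ))⁻¹) ^ L
          = ∏ i ∈ Finset.Icc 1 L, (1 + (Wi i : ℝ)) := by
        rw [← Real.rpow_natCast (_ ^ _) L, ← Real.rpow_mul hP0,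
          inv_mul_cancel₀ (ne_of_gt hLpos), Real.rpow_one]
      calc ((∏ i ∈ Finset.Icc 1 L, (1 + Wi i) : ℕ) : ℝ)
          = ∏ i ∈ Finset.Icc 1 L, (1 + (Wi i : ℝ)) := by push_cast; rfl
        _ = ((∏ i ∈ Finset.Icc 1 L, (1 + (Wi i : ℝ))) ^ ((L : ℝ))⁻¹) ^ L := hback.symm
        _ ≤ (((L : ℝ) + W) / L) ^ L := pow_le_pow_left₀ (Real.rpow_nonneg hP0 _) hgm L
  refine ⟨key1, key2, fun hLW => ?_⟩
  rcases Nat.eq_zero_or_pos L with hL0 | hL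
  · subst hL0
    simp only [pow_zero]
    calc (Set.ncard paths : ℝ) ≤ ((∏ i ∈ Finset.Icc 1 0, (1 + Wi i) : ℕ) : ℝ) := by
          exact_mod_cast key1
      _ = 1 := by simp
  · have hLpos : (0 : ℝ) < L := by exact_mod_cast hL
    have hWL : (L : ℝ) ≤ W := by exact_mod_cast hLW
    calc (Set.ncard paths : ℝ) ≤ ((∏ i ∈ Finset.Icc 1 L, (1 + Wi i) : ℕ) : ℝ) := by
          exact_mod_cast key1
      _ ≤ (((L : ℝ) + W) / L) ^ L := key2
      _ ≤ (2 * (W : ℝ) / L) ^ L := by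
          apply pow_le_pow_left₀ (by positivity)
          exact (div_le_div_iff_of_pos_right hLpos).mpr (by linarith)
end

section
/- There exists a universal constant C > 0 such that for all positive integers m and n, there is a feedforward ReLU network architecture with at most C·(m + n) parameters and at most C·m computation units whose class F of computed real-valued functions (as the parameters range over all real values) satisfies VCdim(F) ≥ m·n. -/
/-- Node-code layout for our architecture (all codes are natural numbers):
inputs `0,…,n-1` (selector) and `n` (index input `t`); `r₀ = n+1`;
for `K < m`: `p_{K+1} = n+2+3K`, `q_{K+1} = n+3+3K`, `r_{K+1} = n+4+3K`;
for `K < m+2`: `u_{K+1} = n+3m+2+K`; for `K < m`: `g_{K+1} = n+4m+4+K`;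
output `= n+5m+4`.  `srcs m n v` is the set of codes of predecessors of `v`. -/
def srcs (m n v : ℕ) : Finset ℕ :=
  if v = n + 1 then Finset.range n
  else if v < n + 2 then ∅
  else if v ≤ n + 3*m + 1 then
    if (v - n - 2) % 3 = 2 then {n + 1 + ((v - n - 2)/3)*3, v - 2, v - 1}
    else {n + 1 + ((v - n - 2)/3)*3}
  else if v ≤ n + 4*m + 3 then {n}
  else if v ≤ n + 5*m + 3 then
    {n + 2 + 3*(v - n - 4*m - 4), n + 3 + 3*(v - n - 4*m - 4),
     n + 3*m + 2 + (v - n - 4*m - 4), n + 3*m + 3 + (v - n - 4*m - 4),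
     n + 3*m + 4 + (v - n - 4*m - 4)}
  else if v = n + 5*m + 4 then (Finset.range m).image (fun K => n + 4*m + 4 + K)
  else ∅

lemma srcs_lt {m n v u : ℕ} (hu : u ∈ srcs m n v) : u < v := by
  unfold srcs at hu
  split_ifs at hu with h1 h2 h3 h4 h5 h6 h7
  · rw [Finset.mem_range] at hu; omega
  · simp at hu
  · simp only [Finset.mem_insert, Finset.mem_singleton] at hu; omega
  · simp only [Finset.mem_insert, Finset.mem_singleton] at hu; omega
  · simp only [Finset.mem_singleton] at hu; omega
  · simp only [Finset.mem_insert, Finset.mem_singleton] at hu; omega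
  · simp only [Finset.mem_image, Finset.mem_range] at hu; omega
  · simp at hu

lemma srcs_empty {m n v : ℕ} (hv : v ≤ n) : srcs m n v = ∅ := by
  unfold srcs
  rw [if_neg (by omega), if_pos (by omega)]

/-- The architecture: `n+1` inputs, `5m+4` computation units. -/
def arch (m n : ℕ) : NNArch where
  numNodes := n + 5*m + 5
  numInputs := n + 1
  hIn := by omega
  edges := Finset.univ.filter (fun e => (e.1 : ℕ) ∈ srcs m n (e.2 : ℕ))
  hTopo := fun e he => by
    have := srcs_lt (Finset.mem_filter.mp he).2
    exact Fin.lt_def.mpr this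
  hTarget := fun e he => by
    by_contra h
    have h2 := (Finset.mem_filter.mp he).2
    rw [srcs_empty (by omega)] at h2
    exact absurd h2 (Finset.notMem_empty _)
  act := fun _ => fun z => max 0 z

attribute [reducible] arch

lemma arch_isReLU (m n : ℕ) : (arch m n).IsReLU := fun _ => rfl

lemma arch_numUnits (m n : ℕ) : (arch m n).numUnits = 5*m + 4 := by
  simp only [NNArch.numUnits, arch]; omega

lemma srcs_card_le {m n v : ℕ} (h1 : v ≠ n + 1) (h2 : v ≠ n + 5*m + 4) :
    (srcs m n v).card ≤ 5 := by
  unfold srcs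
  rw [if_neg h1]
  split_ifs
  · simp
  · refine le_trans (Finset.card_insert_le _ _) (Nat.succ_le_succ ?_)
    refine le_trans (Finset.card_insert_le _ _) (Nat.succ_le_succ ?_)
    simp
  · simp
  · simp
  · refine le_trans (Finset.card_insert_le _ _) (Nat.succ_le_succ ?_)
    refine le_trans (Finset.card_insert_le _ _) (Nat.succ_le_succ ?_)
    refine le_trans (Finset.card_insert_le _ _) (Nat.succ_le_succ ?_)
    refine le_trans (Finset.card_insert_le _ _) (Nat.succ_le_succ ?_)
    simp
  · simp

lemma srcs_card_r0 (m n : ℕ) : (srcs m n (n+1)).card = n := by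
  unfold srcs; rw [if_pos rfl, Finset.card_range]

lemma srcs_card_out (m n : ℕ) : (srcs m n (n + 5*m + 4)).card ≤ m := by
  unfold srcs
  rw [if_neg (by omega), if_neg (by omega), if_neg (by omega), if_neg (by omega),
    if_neg (by omega), if_pos rfl]
  exact le_trans (Finset.card_image_le) (by simp)

lemma arch_edges_card (m n : ℕ) : (arch m n).edges.card ≤ 6*n + 26*m + 25 := by
  classical
  have hpart : (arch m n).edges.card
      = ∑ v : Fin (n + 5*m + 5), ((arch m n).edges.filter (fun e => e.2 = v)).card := by
    exact Finset.card_eq_sum_card_fiberwise (fun e _ => Finset.mem_univ e.2)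
  have hfib : ∀ v : Fin (n + 5*m + 5),
      ((arch m n).edges.filter (fun e => e.2 = v)).card ≤ (srcs m n (v:ℕ)).card := by
    intro v
    have : ((arch m n).edges.filter (fun e => e.2 = v)).card
        = (((arch m n).edges.filter (fun e => e.2 = v)).image (fun e => (e.1 : ℕ))).card := by
      rw [Finset.card_image_of_injOn]
      intro a ha b hb hab
      simp only [Finset.mem_coe, Finset.mem_filter] at ha hb
      have : a.2 = b.2 := ha.2.trans hb.2.symm
      exact Prod.ext (Fin.val_injective hab) this
    rw [this]
    apply Finset.card_le_card
    intro a ha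
    simp only [Finset.mem_image, Finset.mem_filter] at ha
    obtain ⟨e, ⟨he, hev⟩, hea⟩ := ha
    have hmem := he.2
    subst hea; subst hev
    exact hmem
  calc (arch m n).edges.card
      ≤ ∑ v : Fin (n + 5*m + 5), (srcs m n (v:ℕ)).card := by
        rw [hpart]; exact Finset.sum_le_sum (fun v _ => hfib v)
    _ = ∑ v ∈ Finset.range (n + 5*m + 5), (srcs m n v).card := by
        rw [Finset.sum_range fun v => (srcs m n v).card]
    _ ≤ 6*n + 26*m + 25 := by
        have hmem1 : n + 1 ∈ Finset.range (n + 5*m + 5) := by simp; omega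
        rw [← Finset.add_sum_erase _ _ hmem1]
        have hmem2 : n + 5*m + 4 ∈ (Finset.range (n + 5*m + 5)).erase (n+1) := by
          simp [Finset.mem_erase]; omega
        rw [← Finset.add_sum_erase _ _ hmem2]
        have hbound : ∑ v ∈ ((Finset.range (n + 5*m + 5)).erase (n+1)).erase (n + 5*m + 4),
            (srcs m n v).card ≤ 5 * (n + 5*m + 5) := by
          calc _ ≤ ∑ _v ∈ ((Finset.range (n + 5*m + 5)).erase (n+1)).erase (n + 5*m + 4), 5 := by
                apply Finset.sum_le_sum
                intro v hv
                simp only [Finset.mem_erase] at hv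
                exact srcs_card_le hv.2.1 hv.1
            _ ≤ 5 * (n + 5*m + 5) := by
                rw [Finset.sum_const, smul_eq_mul]
                have : (((Finset.range (n + 5*m + 5)).erase (n+1)).erase (n + 5*m + 4)).card
                    ≤ n + 5*m + 5 := le_trans (Finset.card_le_card (by
                      intro a ha
                      exact Finset.mem_of_mem_erase (Finset.mem_of_mem_erase ha))) (by simp)
                omega
        have h1 := srcs_card_r0 m n
        have h2 := srcs_card_out m n
        omega

lemma arch_numParams (m n : ℕ) : (arch m n).numParams ≤ 6*n + 31*m + 29 := by
  have := arch_edges_card m n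
  have := arch_numUnits m n
  unfold NNArch.numParams
  omega

lemma sum_fin_mem {NN : ℕ} (S : Finset ℕ) (G : Fin NN → ℝ) :
    ∑ u ∈ Finset.univ.filter (fun u : Fin NN => (u : ℕ) ∈ S), G u
      = ∑ a ∈ S, if h : a < NN then G ⟨a, h⟩ else 0 := by
  rw [← Finset.sum_filter_of_ne
    (s := S) (p := fun a => a < NN)
    (f := fun a => if h : a < NN then G ⟨a, h⟩ else 0)
    (by intro a ha hne; by_contra hlt; exact hne (by simp only [dif_neg hlt]))]
  refine Finset.sum_bij' (i := fun (u : Fin NN) (_ : u ∈ _) => (u : ℕ))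
    (j := fun a (ha : a ∈ S.filter (· < NN)) => (⟨a, (Finset.mem_filter.mp ha).2⟩ : Fin NN))
    ?_ ?_ ?_ ?_ ?_
  · intro u hu
    simp only [Finset.mem_filter, Finset.mem_univ, true_and] at hu ⊢
    exact ⟨hu, u.isLt⟩
  · intro a ha
    simp only [Finset.mem_filter, Finset.mem_univ, true_and]
    exact (Finset.mem_filter.mp ha).1
  · intro u hu; rfl
  · intro a ha; rfl
  · intro u hu
    rw [dif_pos u.isLt]

/-- The weighted sum feeding a computation unit of our architecture. -/
noncomputable def archSum (m n : ℕ) (w : Fin (n+5*m+5) × Fin (n+5*m+5) → ℝ)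
    (b : Fin (n+5*m+5) → ℝ) (x : Fin (n+1) → ℝ) (v : Fin (n+5*m+5)) : ℝ :=
  (∑ a ∈ srcs m n (v : ℕ), if h : a < n+5*m+5 then
      w (⟨a, h⟩, v) * (arch m n).value w b x ⟨a, h⟩ else 0) + b v

lemma arch_numNodes (m n : ℕ) : (arch m n).numNodes = n+5*m+5 := rfl
lemma arch_numInputs (m n : ℕ) : (arch m n).numInputs = n+1 := rfl

lemma arch_incoming (m n : ℕ) (v : Fin (n+5*m+5)) :
    (arch m n).incoming v
      = (Finset.univ.filter (fun u : Fin (n+5*m+5) => (u : ℕ) ∈ srcs m n (v : ℕ))).image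
          (fun u => (u, v)) := by
  unfold NNArch.incoming
  show ((Finset.univ.filter (fun e : Fin (n+5*m+5) × Fin (n+5*m+5) =>
      (e.1 : ℕ) ∈ srcs m n (e.2 : ℕ))).filter (fun e => e.2 = v)) = _
  rw [Finset.filter_filter]
  ext e
  simp only [Finset.mem_filter, Finset.mem_univ, true_and, Finset.mem_image]
  constructor
  · rintro ⟨h1, h2⟩
    exact ⟨e.1, by rw [← h2]; exact h1, by rw [← h2]⟩
  · rintro ⟨u, hu, rfl⟩
    exact ⟨hu, rfl⟩

lemma arch_sum_eq (m n : ℕ) (w : Fin (n+5*m+5) × Fin (n+5*m+5) → ℝ)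
    (b : Fin (n+5*m+5) → ℝ) (x : Fin (n+1) → ℝ) (v : Fin (n+5*m+5)) :
    (∑ e ∈ ((arch m n).incoming v).attach, w e.1 * (arch m n).value w b x e.1.1) + b v
      = archSum m n w b x v := by
  unfold archSum
  congr 1
  rw [Finset.sum_attach ((arch m n).incoming v)
    (fun p => w p * (arch m n).value w b x p.1)]
  rw [arch_incoming]
  rw [Finset.sum_image (by intro a _ c _ h; exact congrArg Prod.fst h)]
  exact sum_fin_mem _ _

lemma arch_value_input (m n : ℕ) (w) (b) (x : Fin (n+1) → ℝ) (v : Fin (n+5*m+5))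
    (hv : (v : ℕ) < n + 1) :
    (arch m n).value w b x v = x ⟨v, hv⟩ := by
  rw [NNArch.value]
  rw [dif_pos (show (v:ℕ) < (arch m n).numInputs from hv)]

lemma arch_value_comp (m n : ℕ) (w) (b) (x : Fin (n+1) → ℝ) (v : Fin (n+5*m+5))
    (hv : n + 1 ≤ (v : ℕ)) (hout : (v : ℕ) ≠ n + 5*m + 4) :
    (arch m n).value w b x v = max 0 (archSum m n w b x v) := by
  rw [NNArch.value]
  rw [dif_neg (show ¬ (v:ℕ) < (arch m n).numInputs from by rw [arch_numInputs]; omega)]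
  show (if (v:ℕ) = (arch m n).numNodes - 1 then _ else (arch m n).act v _) = _
  rw [if_neg (show ¬ (v:ℕ) = (arch m n).numNodes - 1 from by rw [arch_numNodes]; omega)]
  show max 0 _ = _
  rw [arch_sum_eq]

lemma arch_value_out (m n : ℕ) (w) (b) (x : Fin (n+1) → ℝ) (v : Fin (n+5*m+5))
    (hout : (v : ℕ) = n + 5*m + 4) :
    (arch m n).value w b x v = archSum m n w b x v := by
  rw [NNArch.value]
  rw [dif_neg (show ¬ (v:ℕ) < (arch m n).numInputs from by rw [arch_numInputs]; omega)]
  show (if (v:ℕ) = (arch m n).numNodes - 1 then _ else (arch m n).act v _) = _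
  rw [if_pos (show (v:ℕ) = (arch m n).numNodes - 1 from by rw [arch_numNodes]; omega)]
  rw [arch_sum_eq]

lemma srcs_r0' (m n : ℕ) : srcs m n (n+1) = Finset.range n := by
  unfold srcs; rw [if_pos rfl]

lemma srcs_p (m n K : ℕ) (hK : K < m) : srcs m n (n+2+3*K) = {n+1+3*K} := by
  unfold srcs
  rw [if_neg (by omega), if_neg (by omega), if_pos (by omega), if_neg (by omega)]
  have h : (n+2+3*K - n - 2)/3*3 = 3*K := by omega
  rw [h]

lemma srcs_q (m n K : ℕ) (hK : K < m) : srcs m n (n+3+3*K) = {n+1+3*K} := by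
  unfold srcs
  rw [if_neg (by omega), if_neg (by omega), if_pos (by omega), if_neg (by omega)]
  have h : (n+3+3*K - n - 2)/3*3 = 3*K := by omega
  rw [h]

lemma srcs_r (m n K : ℕ) (hK : K < m) :
    srcs m n (n+4+3*K) = {n+1+3*K, n+2+3*K, n+3+3*K} := by
  unfold srcs
  rw [if_neg (by omega), if_neg (by omega), if_pos (by omega), if_pos (by omega)]
  have h1 : (n+4+3*K - n - 2)/3*3 = 3*K := by omega
  have h2 : n+4+3*K - 2 = n+2+3*K := by omega
  have h3 : n+4+3*K - 1 = n+3+3*K := by omega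
  rw [h1, h2, h3]

lemma srcs_u (m n K : ℕ) (hK : K < m+2) : srcs m n (n+3*m+2+K) = {n} := by
  unfold srcs
  rw [if_neg (by omega), if_neg (by omega), if_neg (by omega), if_pos (by omega)]

lemma srcs_g (m n K : ℕ) (hK : K < m) :
    srcs m n (n+4*m+4+K)
      = {n+2+3*K, n+3+3*K, n+3*m+2+K, n+3*m+3+K, n+3*m+4+K} := by
  unfold srcs
  rw [if_neg (by omega), if_neg (by omega), if_neg (by omega), if_neg (by omega),
    if_pos (by omega)]
  have h : n+4*m+4+K - n - 4*m - 4 = K := by omega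
  rw [h]

lemma srcs_out (m n : ℕ) :
    srcs m n (n+5*m+4) = (Finset.range m).image (fun K => n + 4*m + 4 + K) := by
  unfold srcs
  rw [if_neg (by omega), if_neg (by omega), if_neg (by omega), if_neg (by omega),
    if_neg (by omega), if_pos rfl]

/-- The shattered points: `pt i j` has selector coordinates `e_j` and index
coordinate `i+1`. -/
def pt (m n : ℕ) (i : Fin m) (j : Fin n) : Fin (n+1) → ℝ := fun l =>
  if (l : ℕ) = n then (i : ℕ) + 1 else if (l : ℕ) = (j : ℕ) then 1 else 0

lemma pt_inj (m n : ℕ) : Function.Injective (fun ij : Fin m × Fin n => pt m n ij.1 ij.2) := by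
  rintro ⟨i, j⟩ ⟨i', j'⟩ h
  simp only at h
  have hjn : ¬ ((j:ℕ) = n) := by omega
  have h1 : ((i:ℕ):ℝ) + 1 = ((i':ℕ):ℝ) + 1 := by
    simpa [pt] using congrFun h ⟨n, by omega⟩
  have h2 : (1:ℝ) = if (j:ℕ) = (j':ℕ) then 1 else 0 := by
    simpa [pt, hjn] using congrFun h ⟨(j : ℕ), by omega⟩
  have hi : i = i' := by
    have : ((i:ℕ) : ℝ) = ((i':ℕ) : ℝ) := by linarith
    exact Fin.ext (Nat.cast_injective this)
  have hj : j = j' := by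
    by_contra hne
    rw [if_neg (fun hc => hne (Fin.ext hc))] at h2
    norm_num at h2
  rw [hi, hj]

/-- The bit of point `(k-1, u)` under labelling `c` (as a real number). -/
noncomputable def bitv (m n : ℕ) (c : (Fin (n+1) → ℝ) → Bool) (k u : ℕ) : ℝ :=
  if h : k - 1 < m ∧ u < n then
    (if c (pt m n ⟨k-1, h.1⟩ ⟨u, h.2⟩) then 1 else 0) else 0

lemma bitv_nonneg (m n c k u) : 0 ≤ bitv m n c k u := by
  unfold bitv; split_ifs <;> norm_num

lemma bitv_le_one (m n c k u) : bitv m n c k u ≤ 1 := by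
  unfold bitv; split_ifs <;> norm_num

/-- Residual value after the first `k` bits of the `u`-th encoded number. -/
noncomputable def Aval (m n : ℕ) (c : (Fin (n+1) → ℝ) → Bool) (u k : ℕ) : ℝ :=
  ∑ l ∈ Finset.Ioc k m, bitv m n c l u * (4:ℝ)⁻¹ ^ l

lemma Aval_nonneg (m n c u k) : 0 ≤ Aval m n c u k := by
  apply Finset.sum_nonneg
  intro l _
  exact mul_nonneg (bitv_nonneg m n c l u) (by positivity)

lemma geom_Ioc (M k : ℕ) (h : k ≤ M) :
    ∑ l ∈ Finset.Ioc k M, ((4:ℝ)⁻¹)^l = ((4:ℝ)⁻¹^k - (4:ℝ)⁻¹^M)/3 := by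
  induction M with
  | zero =>
      have : k = 0 := by omega
      subst this; simp
  | succ M ih =>
      rcases Nat.lt_or_ge k (M+1) with hk | hk
      · have hkM : k ≤ M := by omega
        have hdisj : Disjoint (Finset.Ioc k M) (Finset.Ioc M (M+1)) :=
          Finset.disjoint_left.mpr (by
            intro a ha hb
            simp only [Finset.mem_Ioc] at ha hb
            omega)
        rw [← Finset.Ioc_union_Ioc_eq_Ioc hkM (Nat.le_succ M),
          Finset.sum_union hdisj, ih hkM]
        have hIoc : Finset.Ioc M (M+1) = {M+1} := by
          ext a; simp only [Finset.mem_Ioc, Finset.mem_singleton]; omega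
        rw [hIoc, Finset.sum_singleton]
        have h4 : ((4:ℝ)⁻¹)^(M+1) = (4:ℝ)⁻¹^M * 4⁻¹ := pow_succ _ _
        rw [h4]; ring
      · have : k = M + 1 := by omega
        subst this; simp

lemma Aval_le (m n : ℕ) (c : (Fin (n+1) → ℝ) → Bool) (u k : ℕ) (h : k ≤ m) : Aval m n c u k ≤ (4:ℝ)⁻¹^k / 3 := by
  have h1 : Aval m n c u k ≤ ∑ l ∈ Finset.Ioc k m, ((4:ℝ)⁻¹)^l := by
    apply Finset.sum_le_sum
    intro l _
    calc bitv m n c l u * (4:ℝ)⁻¹ ^ l ≤ 1 * (4:ℝ)⁻¹ ^ l := by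
          exact mul_le_mul_of_nonneg_right (bitv_le_one m n c l u) (by positivity)
      _ = (4:ℝ)⁻¹ ^ l := one_mul _
  rw [geom_Ioc m k h] at h1
  have : (0:ℝ) ≤ (4:ℝ)⁻¹^m := by positivity
  linarith

lemma Aval_rec (m n : ℕ) (c : (Fin (n+1) → ℝ) → Bool) (u k : ℕ) (h : k < m) :
    Aval m n c u k = bitv m n c (k+1) u * (4:ℝ)⁻¹^(k+1) + Aval m n c u (k+1) := by
  unfold Aval
  have : Finset.Ioc k m = insert (k+1) (Finset.Ioc (k+1) m) := by
    ext a; simp [Finset.mem_Ioc]; omega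
  rw [this, Finset.sum_insert (by simp [Finset.mem_Ioc])]

/-- Edge weights, as a function of the source and target node codes. -/
noncomputable def wfun (m n : ℕ) (c : (Fin (n+1) → ℝ) → Bool) (u v : ℕ) : ℝ :=
  if v = n + 1 then Aval m n c u 0
  else if v ≤ n + 3*m + 1 then
    (if (v - n - 2) % 3 = 2 then
      (if u = v - 2 then -((4:ℝ)⁻¹^((v-n-2)/3+1))
       else if u = v - 1 then (4:ℝ)⁻¹^((v-n-2)/3+1) else 1)
     else (3/2) * (4:ℝ)^((v-n-2)/3+1))
  else if v ≤ n + 4*m + 3 then 1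
  else if v ≤ n + 5*m + 3 then
    (if u = n + 3 + 3*(v - n - 4*m - 4) then -1
     else if u = n + 3*m + 3 + (v - n - 4*m - 4) then -2 else 1)
  else 1

/-- Biases, as a function of the target node code. -/
noncomputable def bfun (m n : ℕ) (v : ℕ) : ℝ :=
  if v ≤ n + 1 then 0
  else if v ≤ n + 3*m + 1 then
    (if (v - n - 2) % 3 = 0 then -(1/2)
     else if (v - n - 2) % 3 = 1 then -(3/2) else 0)
  else if v ≤ n + 4*m + 3 then ((n + 3*m + 2 : ℕ) : ℝ) - (v : ℝ)
  else if v ≤ n + 5*m + 3 then -1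
  else 0

-- weight evaluations
lemma wfun_r0 (m n c u) : wfun m n c u (n+1) = Aval m n c u 0 := by
  unfold wfun; rw [if_pos rfl]

lemma wfun_p (m n c K u) (hK : K < m) :
    wfun m n c u (n+2+3*K) = (3/2) * (4:ℝ)^(K+1) := by
  unfold wfun
  rw [if_neg (by omega), if_pos (by omega), if_neg (by omega)]
  have h : (n+2+3*K - n - 2)/3 = K := by omega
  rw [h]

lemma wfun_q (m n c K u) (hK : K < m) :
    wfun m n c u (n+3+3*K) = (3/2) * (4:ℝ)^(K+1) := by
  unfold wfun
  rw [if_neg (by omega), if_pos (by omega), if_neg (by omega)]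
  have h : (n+3+3*K - n - 2)/3 = K := by omega
  rw [h]

lemma wfun_r_r (m n c K) (hK : K < m) :
    wfun m n c (n+1+3*K) (n+4+3*K) = 1 := by
  unfold wfun
  rw [if_neg (by omega), if_pos (by omega), if_pos (by omega),
    if_neg (by omega), if_neg (by omega)]

lemma wfun_r_p (m n c K) (hK : K < m) :
    wfun m n c (n+2+3*K) (n+4+3*K) = -((4:ℝ)⁻¹^(K+1)) := by
  unfold wfun
  rw [if_neg (by omega), if_pos (by omega), if_pos (by omega), if_pos (by omega)]
  have h : (n+4+3*K - n - 2)/3 = K := by omega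
  rw [h]

lemma wfun_r_q (m n c K) (hK : K < m) :
    wfun m n c (n+3+3*K) (n+4+3*K) = (4:ℝ)⁻¹^(K+1) := by
  unfold wfun
  rw [if_neg (by omega), if_pos (by omega), if_pos (by omega),
    if_neg (by omega), if_pos (by omega)]
  have h : (n+4+3*K - n - 2)/3 = K := by omega
  rw [h]

lemma wfun_u (m n c K u) (hK : K < m+2) : wfun m n c u (n+3*m+2+K) = 1 := by
  unfold wfun
  rw [if_neg (by omega), if_neg (by omega), if_pos (by omega)]

lemma wfun_g_p (m n c K) (hK : K < m) :
    wfun m n c (n+2+3*K) (n+4*m+4+K) = 1 := by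
  unfold wfun
  rw [if_neg (by omega), if_neg (by omega), if_neg (by omega), if_pos (by omega),
    if_neg (by omega), if_neg (by omega)]

lemma wfun_g_q (m n c K) (hK : K < m) :
    wfun m n c (n+3+3*K) (n+4*m+4+K) = -1 := by
  unfold wfun
  rw [if_neg (by omega), if_neg (by omega), if_neg (by omega), if_pos (by omega),
    if_pos (by omega)]

lemma wfun_g_uA (m n c K) (hK : K < m) :
    wfun m n c (n+3*m+2+K) (n+4*m+4+K) = 1 := by
  unfold wfun
  rw [if_neg (by omega), if_neg (by omega), if_neg (by omega), if_pos (by omega),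
    if_neg (by omega), if_neg (by omega)]

lemma wfun_g_uB (m n c K) (hK : K < m) :
    wfun m n c (n+3*m+3+K) (n+4*m+4+K) = -2 := by
  unfold wfun
  rw [if_neg (by omega), if_neg (by omega), if_neg (by omega), if_pos (by omega),
    if_neg (by omega), if_pos (by omega)]

lemma wfun_g_uC (m n c K) (hK : K < m) :
    wfun m n c (n+3*m+4+K) (n+4*m+4+K) = 1 := by
  unfold wfun
  rw [if_neg (by omega), if_neg (by omega), if_neg (by omega), if_pos (by omega),
    if_neg (by omega), if_neg (by omega)]

lemma wfun_out (m n c u) (hm : 0 < m) : wfun m n c u (n+5*m+4) = 1 := by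
  unfold wfun
  rw [if_neg (by omega), if_neg (by omega), if_neg (by omega), if_neg (by omega)]

-- bias evaluations
lemma bfun_r0 (m n) : bfun m n (n+1) = 0 := by
  unfold bfun; rw [if_pos (by omega)]

lemma bfun_p (m n K) (hK : K < m) : bfun m n (n+2+3*K) = -(1/2) := by
  unfold bfun
  rw [if_neg (by omega), if_pos (by omega), if_pos (by omega)]

lemma bfun_q (m n K) (hK : K < m) : bfun m n (n+3+3*K) = -(3/2) := by
  unfold bfun
  rw [if_neg (by omega), if_pos (by omega), if_neg (by omega), if_pos (by omega)]

lemma bfun_r (m n K) (hK : K < m) : bfun m n (n+4+3*K) = 0 := by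
  unfold bfun
  rw [if_neg (by omega), if_pos (by omega), if_neg (by omega), if_neg (by omega)]

lemma bfun_u (m n K) (hK : K < m+2) : bfun m n (n+3*m+2+K) = -(K:ℝ) := by
  unfold bfun
  rw [if_neg (by omega), if_neg (by omega), if_pos (by omega)]
  push_cast
  ring

lemma bfun_g (m n K) (hK : K < m) : bfun m n (n+4*m+4+K) = -1 := by
  unfold bfun
  rw [if_neg (by omega), if_neg (by omega), if_neg (by omega), if_pos (by omega)]

lemma bfun_out (m n) (hm : 0 < m) : bfun m n (n+5*m+4) = 0 := by
  unfold bfun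
  rw [if_neg (by omega), if_neg (by omega), if_neg (by omega), if_neg (by omega)]

/-- Weight assignment as a function on node pairs. -/
noncomputable def Wt (m n : ℕ) (c : (Fin (n+1) → ℝ) → Bool) :
    Fin (n+5*m+5) × Fin (n+5*m+5) → ℝ := fun e => wfun m n c (e.1 : ℕ) (e.2 : ℕ)

/-- Bias assignment. -/
noncomputable def Bt (m n : ℕ) : Fin (n+5*m+5) → ℝ := fun v => bfun m n (v : ℕ)

lemma nn_lt (m n a : ℕ) (h : a < n+5*m+5) : a < (arch m n).numNodes := h

section values

variable {m n : ℕ} {c : (Fin (n+1) → ℝ) → Bool} {i : Fin m} {j : Fin n}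

/-- Value of the `r₀` node. -/
lemma value_r0 (hm : 0 < m) (v : Fin (n+5*m+5)) (hv : (v:ℕ) = n+1) :
    (arch m n).value (Wt m n c) (Bt m n) (pt m n i j) v = Aval m n c (j:ℕ) 0 := by
  rw [arch_value_comp m n _ _ _ v (by omega) (by omega)]
  unfold archSum
  have hs : srcs m n (v:ℕ) = Finset.range n := by rw [hv]; exact srcs_r0' m n
  rw [hs]
  have hterm : ∀ a ∈ Finset.range n,
      (if h : a < n+5*m+5 then
        Wt m n c (⟨a, h⟩, v) * (arch m n).value (Wt m n c) (Bt m n) (pt m n i j) ⟨a, h⟩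
       else 0)
      = (if a = (j:ℕ) then Aval m n c a 0 else 0) := by
    intro a ha
    rw [Finset.mem_range] at ha
    rw [dif_pos (by omega : a < n+5*m+5)]
    have hin : (arch m n).value (Wt m n c) (Bt m n) (pt m n i j)
          ⟨a, nn_lt m n a (by omega)⟩
        = pt m n i j ⟨a, by omega⟩ :=
      arch_value_input m n _ _ _ _ (show a < n+1 by omega)
    rw [hin]
    have hw : Wt m n c (⟨a, nn_lt m n a (by omega)⟩, v) = Aval m n c a 0 := by
      show wfun m n c a (v:ℕ) = _
      rw [hv]; exact wfun_r0 m n c a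
    rw [hw]
    have hpt : pt m n i j ⟨a, by omega⟩ = (if a = (j:ℕ) then 1 else 0) := by
      unfold pt
      rw [if_neg (show ¬ a = n by omega)]
    rw [hpt]
    split_ifs <;> ring
  rw [Finset.sum_congr rfl hterm, Finset.sum_ite_eq' (Finset.range n) (j:ℕ)
    (fun a => Aval m n c a 0), if_pos (Finset.mem_range.mpr j.isLt)]
  have hb : Bt m n v = 0 := by show bfun m n (v:ℕ) = 0; rw [hv]; exact bfun_r0 m n
  rw [hb, add_zero]
  exact max_eq_right (Aval_nonneg m n c _ _)

/-- Value of a `p` node in terms of the previous residual node. -/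
lemma value_p (K : ℕ) (hK : K < m) (v : Fin (n+5*m+5)) (hv : (v:ℕ) = n+2+3*K) :
    (arch m n).value (Wt m n c) (Bt m n) (pt m n i j) v
      = max 0 ((3/2) * (4:ℝ)^(K+1)
          * (arch m n).value (Wt m n c) (Bt m n) (pt m n i j)
              ⟨n+1+3*K, nn_lt m n _ (by omega)⟩
          - 1/2) := by
  rw [arch_value_comp m n _ _ _ v (by omega) (by omega)]
  unfold archSum
  have hs : srcs m n (v:ℕ) = {n+1+3*K} := by rw [hv]; exact srcs_p m n K hK
  rw [hs, Finset.sum_singleton, dif_pos (by omega : n+1+3*K < n+5*m+5)]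
  have hw : Wt m n c (⟨n+1+3*K, by omega⟩, v) = (3/2) * (4:ℝ)^(K+1) := by
    show wfun m n c (n+1+3*K) (v:ℕ) = _
    rw [hv]; exact wfun_p m n c K _ hK
  have hb : Bt m n v = -(1/2) := by
    show bfun m n (v:ℕ) = _; rw [hv]; exact bfun_p m n K hK
  rw [hw, hb]
  ring_nf

/-- Value of a `q` node in terms of the previous residual node. -/
lemma value_q (K : ℕ) (hK : K < m) (v : Fin (n+5*m+5)) (hv : (v:ℕ) = n+3+3*K) :
    (arch m n).value (Wt m n c) (Bt m n) (pt m n i j) v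
      = max 0 ((3/2) * (4:ℝ)^(K+1)
          * (arch m n).value (Wt m n c) (Bt m n) (pt m n i j)
              ⟨n+1+3*K, nn_lt m n _ (by omega)⟩
          - 3/2) := by
  rw [arch_value_comp m n _ _ _ v (by omega) (by omega)]
  unfold archSum
  have hs : srcs m n (v:ℕ) = {n+1+3*K} := by rw [hv]; exact srcs_q m n K hK
  rw [hs, Finset.sum_singleton, dif_pos (by omega : n+1+3*K < n+5*m+5)]
  have hw : Wt m n c (⟨n+1+3*K, by omega⟩, v) = (3/2) * (4:ℝ)^(K+1) := by
    show wfun m n c (n+1+3*K) (v:ℕ) = _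
    rw [hv]; exact wfun_q m n c K _ hK
  have hb : Bt m n v = -(3/2) := by
    show bfun m n (v:ℕ) = _; rw [hv]; exact bfun_q m n K hK
  rw [hw, hb]
  ring_nf

lemma pow_mul_inv_pow (K : ℕ) : (4:ℝ)^(K+1) * (4:ℝ)⁻¹^(K+1) = 1 := by
  rw [← mul_pow]
  norm_num

/-- `p − q` extracts the `(K+1)`-st bit exactly. -/
lemma pq_diff (K : ℕ) (hK : K < m)
    (hA : (arch m n).value (Wt m n c) (Bt m n) (pt m n i j)
        ⟨n+1+3*K, nn_lt m n _ (by omega)⟩ = Aval m n c (j:ℕ) K) :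
    (arch m n).value (Wt m n c) (Bt m n) (pt m n i j) ⟨n+2+3*K, nn_lt m n _ (by omega)⟩
      - (arch m n).value (Wt m n c) (Bt m n) (pt m n i j) ⟨n+3+3*K, nn_lt m n _ (by omega)⟩
      = bitv m n c (K+1) (j:ℕ) := by
  rw [value_p K hK ⟨n+2+3*K, nn_lt m n _ (by omega)⟩ rfl,
    value_q K hK ⟨n+3+3*K, nn_lt m n _ (by omega)⟩ rfl, hA]
  have hrec := Aval_rec m n c (j:ℕ) K hK
  have hA'0 := Aval_nonneg m n c (j:ℕ) (K+1)
  have hA'le := Aval_le m n c (j:ℕ) (K+1) (by omega)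
  have hone := pow_mul_inv_pow K
  have hpos : (0:ℝ) < (4:ℝ)^(K+1) := by positivity
  have hipos : (0:ℝ) < (4:ℝ)⁻¹^(K+1) := by positivity
  have hbit : bitv m n c (K+1) (j:ℕ) = 0 ∨ bitv m n c (K+1) (j:ℕ) = 1 := by
    unfold bitv; split_ifs <;> simp
  rcases hbit with hb | hb
  · rw [hb] at hrec ⊢
    rw [zero_mul, zero_add] at hrec
    rw [hrec]
    have hz : (3/2) * (4:ℝ)^(K+1) * Aval m n c (j:ℕ) (K+1) - 1/2 ≤ 0 := by
      nlinarith
    rw [max_eq_left (by linarith), max_eq_left (by linarith)]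
    ring
  · rw [hb] at hrec ⊢
    rw [one_mul] at hrec
    rw [hrec]
    have hz : (1:ℝ) ≤ (3/2) * (4:ℝ)^(K+1) * ((4:ℝ)⁻¹^(K+1) + Aval m n c (j:ℕ) (K+1)) - 1/2 := by
      nlinarith
    rw [max_eq_right (by linarith), max_eq_right (by linarith)]
    ring

/-- Value of the residual nodes. -/
lemma value_r (hm : 0 < m) (K : ℕ) (hK : K ≤ m) (v : Fin (n+5*m+5))
    (hv : (v:ℕ) = n+1+3*K) :
    (arch m n).value (Wt m n c) (Bt m n) (pt m n i j) v = Aval m n c (j:ℕ) K := by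
  induction K generalizing v with
  | zero => exact value_r0 hm v (by omega)
  | succ K ih =>
      have hK' : K < m := by omega
      have hA := ih (by omega) ⟨n+1+3*K, by omega⟩ rfl
      rw [arch_value_comp m n _ _ _ v (by omega) (by omega)]
      unfold archSum
      have hs : srcs m n (v:ℕ) = {n+1+3*K, n+2+3*K, n+3+3*K} := by
        rw [hv, show n+1+3*(K+1) = n+4+3*K by ring]
        exact srcs_r m n K hK'
      rw [hs]
      rw [Finset.sum_insert (by simp only [Finset.mem_insert, Finset.mem_singleton]; omega),
        Finset.sum_insert (by simp only [Finset.mem_singleton]; omega),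
        Finset.sum_singleton,
        dif_pos (by omega : n+1+3*K < n+5*m+5),
        dif_pos (by omega : n+2+3*K < n+5*m+5),
        dif_pos (by omega : n+3+3*K < n+5*m+5)]
      have hw1 : Wt m n c (⟨n+1+3*K, by omega⟩, v) = 1 := by
        show wfun m n c (n+1+3*K) (v:ℕ) = _
        rw [hv, show n+1+3*(K+1) = n+4+3*K by ring]
        exact wfun_r_r m n c K hK'
      have hw2 : Wt m n c (⟨n+2+3*K, by omega⟩, v) = -((4:ℝ)⁻¹^(K+1)) := by
        show wfun m n c (n+2+3*K) (v:ℕ) = _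
        rw [hv, show n+1+3*(K+1) = n+4+3*K by ring]
        exact wfun_r_p m n c K hK'
      have hw3 : Wt m n c (⟨n+3+3*K, by omega⟩, v) = (4:ℝ)⁻¹^(K+1) := by
        show wfun m n c (n+3+3*K) (v:ℕ) = _
        rw [hv, show n+1+3*(K+1) = n+4+3*K by ring]
        exact wfun_r_q m n c K hK'
      have hb : Bt m n v = 0 := by
        show bfun m n (v:ℕ) = _
        rw [hv, show n+1+3*(K+1) = n+4+3*K by ring]
        exact bfun_r m n K hK'
      rw [hw1, hw2, hw3, hb, hA, one_mul]
      have hdiff := pq_diff K hK' hA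
      have hrec := Aval_rec m n c (j:ℕ) K hK'
      have hA'0 := Aval_nonneg m n c (j:ℕ) (K+1)
      have heq : Aval m n c (j:ℕ) K
          + (-((4:ℝ)⁻¹^(K+1)) * (arch m n).value (Wt m n c) (Bt m n) (pt m n i j)
              ⟨n+2+3*K, nn_lt m n _ (by omega)⟩
            + (4:ℝ)⁻¹^(K+1) * (arch m n).value (Wt m n c) (Bt m n) (pt m n i j)
              ⟨n+3+3*K, nn_lt m n _ (by omega)⟩)
          + 0
          = Aval m n c (j:ℕ) (K+1) := by
        have hd : -((4:ℝ)⁻¹^(K+1)) * (arch m n).value (Wt m n c) (Bt m n) (pt m n i j)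
              ⟨n+2+3*K, nn_lt m n _ (by omega)⟩
            + (4:ℝ)⁻¹^(K+1) * (arch m n).value (Wt m n c) (Bt m n) (pt m n i j)
              ⟨n+3+3*K, nn_lt m n _ (by omega)⟩
            = -((4:ℝ)⁻¹^(K+1)) * bitv m n c (K+1) (j:ℕ) := by
          rw [← hdiff]; ring
        rw [hd, hrec]; ring
      rw [heq]
      exact max_eq_right hA'0

/-- Value of the `u` (hat-building) nodes. -/
lemma value_u (K : ℕ) (hK : K < m+2) (v : Fin (n+5*m+5)) (hv : (v:ℕ) = n+3*m+2+K) :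
    (arch m n).value (Wt m n c) (Bt m n) (pt m n i j) v
      = max 0 (((i:ℕ):ℝ) + 1 - K) := by
  rw [arch_value_comp m n _ _ _ v (by omega) (by omega)]
  unfold archSum
  have hs : srcs m n (v:ℕ) = {n} := by rw [hv]; exact srcs_u m n K hK
  rw [hs, Finset.sum_singleton, dif_pos (by omega : n < n+5*m+5)]
  have hin : (arch m n).value (Wt m n c) (Bt m n) (pt m n i j) ⟨n, nn_lt m n n (by omega)⟩
      = pt m n i j ⟨n, by omega⟩ := arch_value_input m n _ _ _ _ (show n < n+1 by omega)
  rw [hin]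
  have hw : Wt m n c (⟨n, nn_lt m n n (by omega)⟩, v) = 1 := by
    show wfun m n c n (v:ℕ) = _
    rw [hv]; exact wfun_u m n c K n hK
  have hb : Bt m n v = -(K:ℝ) := by
    show bfun m n (v:ℕ) = _; rw [hv]; exact bfun_u m n K hK
  rw [hw, hb]
  have hpt : pt m n i j ⟨n, by omega⟩ = ((i:ℕ):ℝ) + 1 := by
    unfold pt
    rw [if_pos (show ((⟨n, by omega⟩ : Fin (n+1)) : ℕ) = n from rfl)]
  rw [hpt]
  ring_nf

/-- The hat function built from three `u` nodes. -/
lemma hat_eval (K : ℕ) :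
    max 0 (((i:ℕ):ℝ) + 1 - K) - 2 * max 0 (((i:ℕ):ℝ) + 1 - (K+1))
      + max 0 (((i:ℕ):ℝ) + 1 - (K+2))
      = if K = (i:ℕ) then 1 else 0 := by
  rcases lt_trichotomy K (i:ℕ) with h | h | h
  · have h1 : (K:ℝ) + 1 ≤ ((i:ℕ):ℝ) := by exact_mod_cast Nat.succ_le_of_lt h
    rw [if_neg (by omega)]
    rw [max_eq_right (by linarith), max_eq_right (by linarith),
      max_eq_right (by linarith)]
    ring
  · subst h
    rw [if_pos rfl]
    rw [max_eq_right (by linarith), max_eq_left (by linarith),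
      max_eq_left (by linarith)]
    ring
  · have h1 : ((i:ℕ):ℝ) + 1 ≤ (K:ℝ) := by exact_mod_cast Nat.succ_le_of_lt h
    rw [if_neg (by omega)]
    rw [max_eq_left (by linarith), max_eq_left (by linarith),
      max_eq_left (by linarith)]
    ring

lemma bitv_eval {m n : ℕ} {c : (Fin (n+1) → ℝ) → Bool} (i : Fin m) (j : Fin n) :
    bitv m n c ((i:ℕ)+1) (j:ℕ) = if c (pt m n i j) then 1 else 0 := by
  unfold bitv
  have hc : (i:ℕ)+1-1 < m ∧ (j:ℕ) < n := ⟨by have := i.isLt; omega, j.isLt⟩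
  rw [dif_pos hc]
  have h1 : (⟨(i:ℕ)+1-1, hc.1⟩ : Fin m) = i := Fin.ext (by simp)
  have h2 : (⟨(j:ℕ), hc.2⟩ : Fin n) = j := Fin.ext rfl
  rw [h1, h2]

section values2

variable {m n : ℕ} {c : (Fin (n+1) → ℝ) → Bool} {i : Fin m} {j : Fin n}

/-- Value of a `g` node. -/
lemma value_g (hm : 0 < m) (K : ℕ) (hK : K < m) (v : Fin (n+5*m+5))
    (hv : (v:ℕ) = n+4*m+4+K) :
    (arch m n).value (Wt m n c) (Bt m n) (pt m n i j) v
      = (if K = (i:ℕ) then bitv m n c (K+1) (j:ℕ) else 0) := by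
  rw [arch_value_comp m n _ _ _ v (by omega) (by omega)]
  unfold archSum
  have hs : srcs m n (v:ℕ)
      = {n+2+3*K, n+3+3*K, n+3*m+2+K, n+3*m+3+K, n+3*m+4+K} := by
    rw [hv]; exact srcs_g m n K hK
  rw [hs]
  rw [Finset.sum_insert (by simp only [Finset.mem_insert, Finset.mem_singleton]; omega),
    Finset.sum_insert (by simp only [Finset.mem_insert, Finset.mem_singleton]; omega),
    Finset.sum_insert (by simp only [Finset.mem_insert, Finset.mem_singleton]; omega),
    Finset.sum_insert (by simp only [Finset.mem_singleton]; omega),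
    Finset.sum_singleton,
    dif_pos (by omega : n+2+3*K < n+5*m+5),
    dif_pos (by omega : n+3+3*K < n+5*m+5),
    dif_pos (by omega : n+3*m+2+K < n+5*m+5),
    dif_pos (by omega : n+3*m+3+K < n+5*m+5),
    dif_pos (by omega : n+3*m+4+K < n+5*m+5)]
  have hw1 : Wt m n c (⟨n+2+3*K, by omega⟩, v) = 1 := by
    show wfun m n c (n+2+3*K) (v:ℕ) = _
    rw [hv]; exact wfun_g_p m n c K hK
  have hw2 : Wt m n c (⟨n+3+3*K, by omega⟩, v) = -1 := by
    show wfun m n c (n+3+3*K) (v:ℕ) = _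
    rw [hv]; exact wfun_g_q m n c K hK
  have hw3 : Wt m n c (⟨n+3*m+2+K, by omega⟩, v) = 1 := by
    show wfun m n c (n+3*m+2+K) (v:ℕ) = _
    rw [hv]; exact wfun_g_uA m n c K hK
  have hw4 : Wt m n c (⟨n+3*m+3+K, by omega⟩, v) = -2 := by
    show wfun m n c (n+3*m+3+K) (v:ℕ) = _
    rw [hv]; exact wfun_g_uB m n c K hK
  have hw5 : Wt m n c (⟨n+3*m+4+K, by omega⟩, v) = 1 := by
    show wfun m n c (n+3*m+4+K) (v:ℕ) = _
    rw [hv]; exact wfun_g_uC m n c K hK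
  have hb : Bt m n v = -1 := by
    show bfun m n (v:ℕ) = _; rw [hv]; exact bfun_g m n K hK
  rw [hw1, hw2, hw3, hw4, hw5, hb]
  have hA := value_r (c := c) (i := i) (j := j) hm K (by omega)
    ⟨n+1+3*K, nn_lt m n _ (by omega)⟩ rfl
  have hdiff := pq_diff K hK hA
  have hVuA := value_u (c := c) (i := i) (j := j) K (by omega)
    ⟨n+3*m+2+K, nn_lt m n _ (by omega)⟩ rfl
  have hVuB := value_u (c := c) (i := i) (j := j) (K+1) (by omega)
    ⟨n+3*m+3+K, nn_lt m n _ (by omega)⟩ (by show n+3*m+3+K = n+3*m+2+(K+1); omega)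
  have hVuC := value_u (c := c) (i := i) (j := j) (K+2) (by omega)
    ⟨n+3*m+4+K, nn_lt m n _ (by omega)⟩ (by show n+3*m+4+K = n+3*m+2+(K+2); omega)
  have hH : (arch m n).value (Wt m n c) (Bt m n) (pt m n i j) ⟨n+3*m+2+K, nn_lt m n _ (by omega)⟩
      - 2 * (arch m n).value (Wt m n c) (Bt m n) (pt m n i j) ⟨n+3*m+3+K, nn_lt m n _ (by omega)⟩
      + (arch m n).value (Wt m n c) (Bt m n) (pt m n i j) ⟨n+3*m+4+K, nn_lt m n _ (by omega)⟩
      = (if K = (i:ℕ) then 1 else 0) := by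
    rw [hVuA, hVuB, hVuC]
    have := hat_eval (i := i) K
    push_cast at this ⊢
    convert this using 3 <;> ring
  have hval : 1 * (arch m n).value (Wt m n c) (Bt m n) (pt m n i j) ⟨n+2+3*K, nn_lt m n _ (by omega)⟩
      + (-1 * (arch m n).value (Wt m n c) (Bt m n) (pt m n i j) ⟨n+3+3*K, nn_lt m n _ (by omega)⟩
        + (1 * (arch m n).value (Wt m n c) (Bt m n) (pt m n i j) ⟨n+3*m+2+K, nn_lt m n _ (by omega)⟩
          + (-2 * (arch m n).value (Wt m n c) (Bt m n) (pt m n i j) ⟨n+3*m+3+K, nn_lt m n _ (by omega)⟩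
            + 1 * (arch m n).value (Wt m n c) (Bt m n) (pt m n i j) ⟨n+3*m+4+K, nn_lt m n _ (by omega)⟩)))
      + -1
      = bitv m n c (K+1) (j:ℕ) + (if K = (i:ℕ) then 1 else 0) - 1 := by
    linear_combination hdiff + hH
  rw [hval]
  have hb0 := bitv_nonneg m n c (K+1) (j:ℕ)
  have hb1 := bitv_le_one m n c (K+1) (j:ℕ)
  rcases eq_or_ne K (i:ℕ) with hKi | hKi
  · rw [if_pos hKi, if_pos hKi]
    have : bitv m n c (K+1) (j:ℕ) + 1 - 1 = bitv m n c (K+1) (j:ℕ) := by ring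
    rw [this]
    exact max_eq_right hb0
  · rw [if_neg hKi, if_neg hKi]
    have : bitv m n c (K+1) (j:ℕ) + 0 - 1 = bitv m n c (K+1) (j:ℕ) - 1 := by ring
    rw [this]
    exact max_eq_left (by linarith)

/-- Value of the output node. -/
lemma value_out (hm : 0 < m) (v : Fin (n+5*m+5)) (hv : (v:ℕ) = n+5*m+4) :
    (arch m n).value (Wt m n c) (Bt m n) (pt m n i j) v
      = bitv m n c ((i:ℕ)+1) (j:ℕ) := by
  rw [arch_value_out m n _ _ _ v (by omega)]
  unfold archSum
  have hs : srcs m n (v:ℕ) = (Finset.range m).image (fun K => n + 4*m + 4 + K) := by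
    rw [hv]; exact srcs_out m n
  rw [hs, Finset.sum_image (by intro a _ b _ h; simp only at h; omega)]
  have hterm : ∀ K ∈ Finset.range m,
      (if h : n+4*m+4+K < n+5*m+5 then
        Wt m n c (⟨n+4*m+4+K, h⟩, v)
          * (arch m n).value (Wt m n c) (Bt m n) (pt m n i j) ⟨n+4*m+4+K, h⟩
       else 0)
      = (if K = (i:ℕ) then bitv m n c (K+1) (j:ℕ) else 0) := by
    intro K hKm
    rw [Finset.mem_range] at hKm
    rw [dif_pos (by omega : n+4*m+4+K < n+5*m+5)]
    have hw : Wt m n c (⟨n+4*m+4+K, by omega⟩, v) = 1 := by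
      show wfun m n c (n+4*m+4+K) (v:ℕ) = _
      rw [hv]; exact wfun_out m n c _ hm
    rw [hw, one_mul]
    exact value_g hm K hKm ⟨n+4*m+4+K, nn_lt m n _ (by omega)⟩ rfl
  rw [Finset.sum_congr rfl hterm,
    Finset.sum_ite_eq' (Finset.range m) ((i:ℕ)) (fun K => bitv m n c (K+1) (j:ℕ)),
    if_pos (Finset.mem_range.mpr i.isLt)]
  have hb : Bt m n v = 0 := by
    show bfun m n (v:ℕ) = _; rw [hv]; exact bfun_out m n hm
  rw [hb, add_zero]

end values2

end values


/-- **Tightness of the `O(W·U)` bound (Remark 2).**  There is a universal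
constant `C > 0` such that for all positive integers `m` and `n` there exists
a ReLU network architecture with at most `C·(m + n)` parameters and at most
`C·m` computation units whose function class has VC-dimension at least `m·n`,
i.e. it shatters some set of `m·n` points. -/
theorem statement17 :
    ∃ C : ℕ, 0 < C ∧
      ∀ m n : ℕ, 0 < m → 0 < n →
        ∃ N : NNArch, N.IsReLU ∧
          N.numParams ≤ C * (m + n) ∧
          N.numUnits ≤ C * m ∧
          ∃ S : Finset (Fin N.numInputs → ℝ),
            m * n ≤ S.card ∧ Shatters N.funClass S := by
  refine ⟨60, by norm_num, ?_⟩
  intro m n hm hn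
  refine ⟨arch m n, arch_isReLU m n, ?_, ?_, ?_⟩
  · have := arch_numParams m n
    have h60 : 6*n + 31*m + 29 ≤ 60 * (m + n) := by omega
    omega
  · rw [arch_numUnits]; omega
  · refine ⟨Finset.image (fun ij : Fin m × Fin n => pt m n ij.1 ij.2) Finset.univ, ?_, ?_⟩
    · rw [Finset.card_image_of_injective _ (pt_inj m n), Finset.card_univ]
      simp
    · intro c
      refine ⟨(arch m n).eval (Wt m n c) (Bt m n), ⟨Wt m n c, Bt m n, rfl⟩, ?_⟩
      intro x hx
      obtain ⟨ij, -, rfl⟩ := Finset.mem_image.mp hx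
      obtain ⟨i, j⟩ := ij
      have hout : (((arch m n).outNode : ℕ)) = n+5*m+4 := by
        show (arch m n).numNodes - 1 = n+5*m+4
        show n+5*m+5 - 1 = n+5*m+4
        omega
      have hev : (arch m n).eval (Wt m n c) (Bt m n) (pt m n i j)
          = bitv m n c ((i:ℕ)+1) (j:ℕ) := by
        unfold NNArch.eval
        exact value_out hm ((arch m n).outNode) hout
      show (0 < (arch m n).eval (Wt m n c) (Bt m n) (pt m n i j) ↔ _)
      rw [hev, bitv_eval]
      cases h : c (pt m n i j) <;> simp [h]
end
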